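/- arXiv:2402.16191 — 5 statements merged into one kernel-verified Lean document; each statement's English description precedes it below -/
import Mathlib

section
/- Let (A[[ν]],⋆) be a formal deformation of A. Then for any two central elements a, b ∈ Z(A), the first-order bracket {a,b}_1 (the coefficient of ν in a⋆b − b⋆a) again belongs to the center Z(A). -/
open PowerSeries

/-- A formal deformation `(A⟦ν⟧, ⋆)` of an associative unital `R`-algebra `A`:
an `R⟦ν⟧`-bilinear, associative, unital (with unit the constant series `1`)
multiplication `⋆` on the `R⟦ν⟧`-module `A⟦ν⟧`, such that `a ⋆ b ≡ a * b (mod ν·A⟦ν⟧)`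
for all `a, b : A` (viewed as constant power series).  The `R⟦ν⟧`-module structure on
`A⟦ν⟧` is given by `c • P = (map (algebraMap R A) c) * P`. -/
structure FormalDeformation (R A : Type*) [CommRing R] [Ring A] [Algebra R A] where
  star : PowerSeries A → PowerSeries A → PowerSeries A
  add_star : ∀ P Q S, star (P + Q) S = star P S + star Q S
  star_add : ∀ P Q S, star P (Q + S) = star P Q + star P S
  smul_star : ∀ (c : PowerSeries R) (P Q : PowerSeries A),
      star (PowerSeries.map (algebraMap R A) c * P) Q
        = PowerSeries.map (algebraMap R A) c * star P Q
  star_smul : ∀ (c : PowerSeries R) (P Q : PowerSeries A),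
      star P (PowerSeries.map (algebraMap R A) c * Q)
        = PowerSeries.map (algebraMap R A) c * star P Q
  star_assoc : ∀ P Q S, star (star P Q) S = star P (star Q S)
  one_star : ∀ P, star 1 P = P
  star_one : ∀ P, star P 1 = P
  star_deform : ∀ a b : A,
      constantCoeff (R := A) (star (C (R := A) a) (C (R := A) b)) = a * b

namespace FormalDeformation

variable {R A : Type*} [CommRing R] [Ring A] [Algebra R A]

/-- `(a,b)ᵢ` : the coefficient of `νⁱ` in `a ⋆ b`, for `a b : A`. -/
noncomputable def prodCoeff (D : FormalDeformation R A) (i : ℕ) (a b : A) : A :=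
  coeff (R := A) i (D.star (C (R := A) a) (C (R := A) b))

/-- `{a,b}ᵢ` : the coefficient of `νⁱ` in `a ⋆ b − b ⋆ a`, for `a b : A`. -/
noncomputable def brkt (D : FormalDeformation R A) (i : ℕ) (a b : A) : A :=
  coeff (R := A) i (D.star (C (R := A) a) (C (R := A) b) - D.star (C (R := A) b) (C (R := A) a))

end FormalDeformation

/-- `H_ν = Z(A) + ν·A⟦ν⟧` : the power series whose constant term is central in `A`. -/
def Hnu (A : Type*) [Ring A] : Set (PowerSeries A) :=
  {P | constantCoeff (R := A) P ∈ Set.center A}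

namespace FormalDeformation

variable {R A : Type*} [CommRing R] [Ring A] [Algebra R A] (D : FormalDeformation R A)

lemma star_X_mul' (P Q : PowerSeries A) : D.star (X * P) Q = X * D.star P Q := by
  simpa [PowerSeries.map_X] using D.smul_star X P Q

lemma X_mul_star' (P Q : PowerSeries A) : D.star P (X * Q) = X * D.star P Q := by
  simpa [PowerSeries.map_X] using D.star_smul X P Q

lemma sub_star' (P Q S : PowerSeries A) :
    D.star (P - Q) S = D.star P S - D.star Q S := by
  have h := D.add_star (P - Q) Q S
  rw [sub_add_cancel] at h
  exact eq_sub_of_add_eq h.symm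

lemma star_sub' (P Q S : PowerSeries A) :
    D.star P (Q - S) = D.star P Q - D.star P S := by
  have h := D.star_add P (Q - S) S
  rw [sub_add_cancel] at h
  exact eq_sub_of_add_eq h.symm

lemma constantCoeff_star (P Q : PowerSeries A) :
    constantCoeff (R := A) (D.star P Q) = constantCoeff (R := A) P * constantCoeff (R := A) Q := by
  obtain ⟨P', hP'⟩ : (X : PowerSeries A) ∣ (P - C (R := A) (constantCoeff (R := A) P)) := by
    rw [PowerSeries.X_dvd_iff]; simp
  obtain ⟨Q', hQ'⟩ : (X : PowerSeries A) ∣ (Q - C (R := A) (constantCoeff (R := A) Q)) := by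
    rw [PowerSeries.X_dvd_iff]; simp
  have hP : P = C (R := A) (constantCoeff (R := A) P) + X * P' := by
    rw [← hP']; abel
  have hQ : Q = C (R := A) (constantCoeff (R := A) Q) + X * Q' := by
    rw [← hQ']; abel
  nth_rewrite 1 [hP, hQ]
  rw [D.add_star, D.star_add, D.star_X_mul', D.X_mul_star']
  simp [D.star_deform]

/-- The Leibniz rule for the star-commutator. -/
lemma leibniz (P Q S : PowerSeries A) :
    D.star (D.star P Q) S - D.star S (D.star P Q)
      = D.star P (D.star Q S - D.star S Q)
        + D.star (D.star P S - D.star S P) Q := by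
  rw [D.star_sub', D.sub_star', D.star_assoc P Q S, D.star_assoc P S Q, D.star_assoc S P Q]
  abel

end FormalDeformation

/-- for central `a, b ∈ Z(A)`, the first-order bracket `{a,b}₁`
(the coefficient of `ν` in `a ⋆ b − b ⋆ a`) is again central. -/
theorem brkt_one_mem_center {R A : Type*} [CommRing R] [Ring A] [Algebra R A]
    (D : FormalDeformation R A) (a b : A)
    (ha : a ∈ Set.center A) (hb : b ∈ Set.center A) :
    D.brkt 1 a b ∈ Set.center A := by
  rw [Semigroup.mem_center_iff]
  intro c
  set Ca := C (R := A) a; set Cb := C (R := A) b; set Cc := C (R := A) c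
  -- the three first-order commutators vanish at order 0
  have hcomm : ∀ x y : A, x * y = y * x → ∃ u : PowerSeries A,
      D.star (C (R := A) x) (C (R := A) y) - D.star (C (R := A) y) (C (R := A) x) = X * u := by
    intro x y hxy
    have : (X : PowerSeries A) ∣ (D.star (C (R := A) x) (C (R := A) y) - D.star (C (R := A) y) (C (R := A) x)) := by
      rw [PowerSeries.X_dvd_iff]
      simp [D.star_deform, hxy]
    exact this
  obtain ⟨u, hu⟩ := hcomm a b (ha.comm b)
  obtain ⟨v, hv⟩ := hcomm b c (hb.comm c)
  obtain ⟨w, hw⟩ := hcomm a c (ha.comm c)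
  -- Leibniz identity applied twice
  have h1 := D.leibniz Ca Cb Cc
  have h2 := D.leibniz Cb Ca Cc
  -- the commutator of `a⋆b - b⋆a` with `c`
  have key : D.star (X * u) Cc - D.star Cc (X * u)
      = X * (D.star Ca v + D.star w Cb - (D.star Cb w + D.star v Ca)) := by
    rw [← hu, D.sub_star', D.star_sub']
    rw [hv] at h1 h2
    rw [hw] at h1 h2
    rw [D.X_mul_star', D.star_X_mul'] at h1 h2
    rw [← mul_add] at h1 h2
    rw [show D.star (D.star Ca Cb) Cc - D.star (D.star Cb Ca) Cc
          - (D.star Cc (D.star Ca Cb) - D.star Cc (D.star Cb Ca))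
        = (D.star (D.star Ca Cb) Cc - D.star Cc (D.star Ca Cb))
          - (D.star (D.star Cb Ca) Cc - D.star Cc (D.star Cb Ca)) by abel,
      h1, h2, ← mul_sub]
  -- compare coefficients of ν¹ on both sides
  have coeff1 := congrArg (PowerSeries.coeff (R := A) 1) key
  rw [D.star_X_mul', D.X_mul_star', ← mul_sub] at coeff1
  rw [PowerSeries.coeff_succ_X_mul, PowerSeries.coeff_succ_X_mul] at coeff1
  rw [PowerSeries.coeff_zero_eq_constantCoeff] at coeff1
  simp only [Ca, Cb, Cc, map_sub, map_add, D.constantCoeff_star,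
    PowerSeries.constantCoeff_C] at coeff1
  -- the RHS vanishes since a, b are central
  have hrhs : a * constantCoeff (R := A) v + constantCoeff (R := A) w * b
      - (b * constantCoeff (R := A) w + constantCoeff (R := A) v * a) = 0 := by
    rw [ha.comm, hb.comm]; abel
  rw [hrhs] at coeff1
  -- identify `constantCoeff u` with `brkt 1 a b`
  have hu1 : constantCoeff (R := A) u = D.brkt 1 a b := by
    have := congrArg (PowerSeries.coeff (R := A) 1) hu
    rw [PowerSeries.coeff_succ_X_mul, PowerSeries.coeff_zero_eq_constantCoeff] at this
    exact this.symm
  rw [hu1] at coeff1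
  exact (sub_eq_zero.mp coeff1).symm
end

section
/- Let A be any associative unital R-algebra with center Z(A). On Π(A) := Z(A) × (A/Z(A)) the operations (a, ā1)·(b, b̄1) := (ab, class of (a b1 + a1 b)) and {(a, ā1),(b, b̄1)} := (0, class of [a1,b1]) are well defined (independent of the chosen representatives a1, b1 of the classes ā1, b̄1) and make Π(A) a commutative Poisson algebra over R: the product is associative, commutative and unital with unit (1, 0̄), the bracket is R-bilinear, alternating, satisfies the Jacobi identity, and satisfies the Leibniz identity with respect to the product. Moreover this bracket is identically zero if and only if A is 2-step nilpotent, i.e. [[A,A],A] = 0. -/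
/-- The center `Z(A)` of `A`, viewed as an `R`-submodule of `A`. -/
def centerSub (R A : Type*) [CommRing R] [Ring A] [Algebra R A] : Submodule R A :=
  Subalgebra.toSubmodule (Subalgebra.center R A)

/-- Adding a central element to the left argument does not change the commutator. -/
lemma commL_aux {R A : Type*} [CommRing R] [Ring A] [Algebra R A]
    {z : A} (hz : z ∈ Subalgebra.center R A) (x y : A) :
    (x + z) * y - y * (x + z) = x * y - y * x := by
  have h := Subalgebra.mem_center_iff.mp hz y
  rw [add_mul, mul_add, h]; abel

/-- Adding a central element to the right argument does not change the commutator. -/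
lemma commR_aux {R A : Type*} [CommRing R] [Ring A] [Algebra R A]
    {z : A} (hz : z ∈ Subalgebra.center R A) (x y : A) :
    x * (y + z) - (y + z) * x = x * y - y * x := by
  have h := Subalgebra.mem_center_iff.mp hz x
  rw [add_mul, mul_add, h]; abel

/-- on `Π(A) = Z(A) × (A/Z(A))` the operations
`(a, ā1)·(b, b̄1) = (ab, class (a b1 + a1 b))` and
`{(a, ā1),(b, b̄1)} = (0, class [a1,b1])` are well defined and make `Π(A)` a commutative
Poisson algebra over `R`: the product is associative, commutative and unital with unit
`(1, 0̄)`, the bracket is `R`-bilinear, alternating, satisfies the Jacobi identity and the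
Leibniz identity.  Moreover the bracket vanishes identically iff `A` is 2-step nilpotent.
(All identities are stated on representatives; by well-definedness this is equivalent to
the corresponding identities on `Π(A)`.) -/
theorem trivial_deformation_poisson_algebra {R A : Type*} [CommRing R] [Ring A]
    [Algebra R A] :
    -- the product is well defined
    (∀ a b a1 a1' b1 b1' : A, a ∈ Subalgebra.center R A → b ∈ Subalgebra.center R A →
      Submodule.Quotient.mk (p := centerSub R A) a1 = Submodule.Quotient.mk a1' →
      Submodule.Quotient.mk (p := centerSub R A) b1 = Submodule.Quotient.mk b1' →
      Submodule.Quotient.mk (p := centerSub R A) (a * b1 + a1 * b)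
        = Submodule.Quotient.mk (a * b1' + a1' * b)) ∧
    -- the bracket is well defined
    (∀ a1 a1' b1 b1' : A,
      Submodule.Quotient.mk (p := centerSub R A) a1 = Submodule.Quotient.mk a1' →
      Submodule.Quotient.mk (p := centerSub R A) b1 = Submodule.Quotient.mk b1' →
      Submodule.Quotient.mk (p := centerSub R A) (a1 * b1 - b1 * a1)
        = Submodule.Quotient.mk (a1' * b1' - b1' * a1')) ∧
    -- first components: `Z(A)` is a commutative unital subalgebra
    (∀ a b : A, a ∈ Subalgebra.center R A → b ∈ Subalgebra.center R A →
      a * b ∈ Subalgebra.center R A ∧ a * b = b * a) ∧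
    ((1 : A) ∈ Subalgebra.center R A) ∧
    -- commutativity of the product (second components)
    (∀ a b a1 b1 : A, a ∈ Subalgebra.center R A → b ∈ Subalgebra.center R A →
      Submodule.Quotient.mk (p := centerSub R A) (a * b1 + a1 * b)
        = Submodule.Quotient.mk (b * a1 + b1 * a)) ∧
    -- associativity of the product (second components)
    (∀ a b c a1 b1 c1 : A, a ∈ Subalgebra.center R A → b ∈ Subalgebra.center R A →
        c ∈ Subalgebra.center R A →
      Submodule.Quotient.mk (p := centerSub R A) ((a * b) * c1 + (a * b1 + a1 * b) * c)
        = Submodule.Quotient.mk (a * (b * c1 + b1 * c) + a1 * (b * c))) ∧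
    -- unitality: `(1, 0̄)` is a unit (second components)
    (∀ b b1 : A, b ∈ Subalgebra.center R A →
      Submodule.Quotient.mk (p := centerSub R A) ((1 : A) * b1 + 0 * b)
          = Submodule.Quotient.mk b1 ∧
      Submodule.Quotient.mk (p := centerSub R A) (b * 0 + b1 * 1)
          = Submodule.Quotient.mk b1) ∧
    -- the bracket is R-bilinear (in each argument) ...
    (∀ (r : R) (a1 b1 c1 : A),
      Submodule.Quotient.mk (p := centerSub R A)
          ((r • a1 + c1) * b1 - b1 * (r • a1 + c1))
        = r • Submodule.Quotient.mk (p := centerSub R A) (a1 * b1 - b1 * a1)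
          + Submodule.Quotient.mk (p := centerSub R A) (c1 * b1 - b1 * c1)) ∧
    (∀ (r : R) (a1 b1 c1 : A),
      Submodule.Quotient.mk (p := centerSub R A)
          (a1 * (r • b1 + c1) - (r • b1 + c1) * a1)
        = r • Submodule.Quotient.mk (p := centerSub R A) (a1 * b1 - b1 * a1)
          + Submodule.Quotient.mk (p := centerSub R A) (a1 * c1 - c1 * a1)) ∧
    -- ... and alternating
    (∀ a1 : A, Submodule.Quotient.mk (p := centerSub R A) (a1 * a1 - a1 * a1) = 0) ∧
    -- Jacobi identity
    (∀ a1 b1 c1 : A,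
      Submodule.Quotient.mk (p := centerSub R A)
          ((a1 * (b1 * c1 - c1 * b1) - (b1 * c1 - c1 * b1) * a1)
            + (b1 * (c1 * a1 - a1 * c1) - (c1 * a1 - a1 * c1) * b1)
            + (c1 * (a1 * b1 - b1 * a1) - (a1 * b1 - b1 * a1) * c1)) = 0) ∧
    -- Leibniz identity
    (∀ a b c a1 b1 c1 : A, a ∈ Subalgebra.center R A → b ∈ Subalgebra.center R A →
        c ∈ Subalgebra.center R A →
      Submodule.Quotient.mk (p := centerSub R A)
          (a1 * (b * c1 + b1 * c) - (b * c1 + b1 * c) * a1)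
        = Submodule.Quotient.mk ((a1 * b1 - b1 * a1) * c + b * (a1 * c1 - c1 * a1))) ∧
    -- the bracket is identically zero iff `A` is 2-step nilpotent
    ((∀ x y : A, Submodule.Quotient.mk (p := centerSub R A) (x * y - y * x) = 0) ↔
      (∀ x y z : A, (x * y - y * x) * z - z * (x * y - y * x) = 0)) := by
  refine ⟨?_, ?_, ?_, ?_, ?_, ?_, ?_, ?_, ?_, ?_, ?_, ?_, ?_⟩
  · -- product well defined
    intro a b a1 a1' b1 b1' ha hb h1 h2
    rw [Submodule.Quotient.eq] at h1 h2 ⊢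
    have h1' : a1 - a1' ∈ Subalgebra.center R A := h1
    have h2' : b1 - b1' ∈ Subalgebra.center R A := h2
    have e : a * b1 + a1 * b - (a * b1' + a1' * b)
        = a * (b1 - b1') + (a1 - a1') * b := by noncomm_ring
    rw [e]
    show _ ∈ Subalgebra.center R A
    exact add_mem (mul_mem ha h2') (mul_mem h1' hb)
  · -- bracket well defined
    intro a1 a1' b1 b1' h1 h2
    rw [Submodule.Quotient.eq] at h1 h2
    have h1' : a1 - a1' ∈ Subalgebra.center R A := h1
    have h2' : b1 - b1' ∈ Subalgebra.center R A := h2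
    have e1 : a1 * b1 - b1 * a1 = a1' * b1 - b1 * a1' := by
      have := commL_aux (R := R) h1' a1' b1
      rwa [add_sub_cancel] at this
    have e2 : a1' * b1 - b1 * a1' = a1' * b1' - b1' * a1' := by
      have := commR_aux (R := R) h2' a1' b1'
      rwa [add_sub_cancel] at this
    rw [e1, e2]
  · -- Z(A) commutative subalgebra
    intro a b ha hb
    exact ⟨mul_mem ha hb, Subalgebra.mem_center_iff.mp hb a⟩
  · exact one_mem _
  · -- commutativity of the product
    intro a b a1 b1 ha hb
    congr 1
    rw [← Subalgebra.mem_center_iff.mp ha b1, Subalgebra.mem_center_iff.mp hb a1]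
    abel
  · -- associativity of the product
    intro a b c a1 b1 c1 _ _ _
    congr 1
    noncomm_ring
  · -- unitality
    intro b b1 _
    constructor <;> · congr 1; simp
  · -- bilinearity (left argument)
    intro r a1 b1 c1
    rw [← Submodule.Quotient.mk_smul, ← Submodule.Quotient.mk_add]
    congr 1
    rw [add_mul, mul_add, smul_mul_assoc, mul_smul_comm, smul_sub]
    abel
  · -- bilinearity (right argument)
    intro r a1 b1 c1
    rw [← Submodule.Quotient.mk_smul, ← Submodule.Quotient.mk_add]
    congr 1
    rw [mul_add, add_mul, mul_smul_comm, smul_mul_assoc, smul_sub]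
    abel
  · -- alternating
    intro a1
    simp
  · -- Jacobi
    intro a1 b1 c1
    have e : (a1 * (b1 * c1 - c1 * b1) - (b1 * c1 - c1 * b1) * a1)
        + (b1 * (c1 * a1 - a1 * c1) - (c1 * a1 - a1 * c1) * b1)
        + (c1 * (a1 * b1 - b1 * a1) - (a1 * b1 - b1 * a1) * c1) = (0 : A) := by
      noncomm_ring
    rw [e, Submodule.Quotient.mk_zero]
  · -- Leibniz
    intro a b c a1 b1 c1 _ hb hc
    congr 1
    have hb' := Subalgebra.mem_center_iff.mp hb a1
    have hc' := Subalgebra.mem_center_iff.mp hc a1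
    calc a1 * (b * c1 + b1 * c) - (b * c1 + b1 * c) * a1
        = (a1 * b) * c1 + b1 * (a1 * c) - a1 * b1 * c + (a1 * b1 - b1 * a1) * c
          + b * (a1 * c1 - c1 * a1) - b * (a1 * c1) - b1 * (c * a1) + a1 * (b1 * c) := by
          noncomm_ring
      _ = _ := by rw [hb', hc']; noncomm_ring
  · -- bracket zero iff 2-step nilpotent
    constructor
    · intro h x y z
      have hm := h x y
      rw [Submodule.Quotient.mk_eq_zero] at hm
      have h2 : x * y - y * x ∈ Subalgebra.center R A := hm
      rw [Subalgebra.mem_center_iff.mp h2 z]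
      exact sub_self _
    · intro h x y
      rw [Submodule.Quotient.mk_eq_zero]
      show _ ∈ Subalgebra.center R A
      rw [Subalgebra.mem_center_iff]
      intro b
      exact (sub_eq_zero.mp (h x y b)).symm
end

section
/- Let (A[[ν]],⋆) be a formal deformation of A. For F0, G0 ∈ Z(A) and F1, G1 ∈ A define the derivations ∂_F(a) := {F0,a}_1 + [F1,a] and ∂_G(a) := {G0,a}_1 + [G1,a] of A, and set K := {F0,G0}_2 + {F1,G0}_1 + {F0,G1}_1 + [F1,G1] ∈ A. Then for all a ∈ A: ∂_F(∂_G(a)) − ∂_G(∂_F(a)) = {{F0,G0}_1, a}_1 + [K, a]. Moreover, if F and G are in involution, i.e. {F0,G0}_1 = 0 and K ∈ Z(A), then ∂_F and ∂_G commute, and ∂_F(G0) = 0 and ∂_G(F0) = 0 (the Hamiltonians F0 and G0 are first integrals of both derivations). -/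
open PowerSeries

/-- The Hamiltonian derivation `∂_H(a) = {H0, a}₁ + [H1, a]` associated with
`H0 ∈ Z(A)` and `H1 ∈ A`. -/
noncomputable def FormalDeformation.ham {R A : Type*} [CommRing R] [Ring A] [Algebra R A]
    (D : FormalDeformation R A) (H0 H1 a : A) : A :=
  D.brkt 1 H0 a + (H1 * a - a * H1)

namespace FormalDeformation

variable {R A : Type*} [CommRing R] [Ring A] [Algebra R A]

variable (D : FormalDeformation R A)

noncomputable def starL (Q : PowerSeries A) : PowerSeries A →+ PowerSeries A :=
  AddMonoidHom.mk' (fun P => D.star P Q) (fun P P' => D.add_star P P' Q)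

noncomputable def starR (P : PowerSeries A) : PowerSeries A →+ PowerSeries A :=
  AddMonoidHom.mk' (fun Q => D.star P Q) (fun Q Q' => D.star_add P Q Q')

lemma starL_apply (P Q : PowerSeries A) : D.starL Q P = D.star P Q := rfl
lemma starR_apply (P Q : PowerSeries A) : D.starR P Q = D.star P Q := rfl

lemma map_X_pow (k : ℕ) :
    (X : PowerSeries A) ^ k = PowerSeries.map (algebraMap R A) ((X : PowerSeries R) ^ k) := by
  rw [map_pow, PowerSeries.map_X]

lemma xpow_mul_star (k : ℕ) (P Q : PowerSeries A) :
    D.star ((X : PowerSeries A) ^ k * P) Q = (X : PowerSeries A) ^ k * D.star P Q := by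
  rw [map_X_pow (R := R), D.smul_star]

lemma star_xpow_mul (k : ℕ) (P Q : PowerSeries A) :
    D.star P ((X : PowerSeries A) ^ k * Q) = (X : PowerSeries A) ^ k * D.star P Q := by
  rw [map_X_pow (R := R), D.star_smul]

lemma coeff_star_congr_left (n : ℕ) (P P' Q : PowerSeries A)
    (h : ∀ j ≤ n, coeff (R := A) j P = coeff (R := A) j P') :
    coeff (R := A) n (D.star P Q) = coeff (R := A) n (D.star P' Q) := by
  have hdvd : (X : PowerSeries A) ^ (n + 1) ∣ (P - P') := by
    rw [X_pow_dvd_iff]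
    intro m hm
    simp [h m (Nat.lt_succ_iff.mp hm)]
  obtain ⟨S, hS⟩ := hdvd
  have key : D.star P Q - D.star P' Q = (X : PowerSeries A) ^ (n + 1) * D.star S Q := by
    rw [← D.xpow_mul_star (R := R), ← hS, ← starL_apply, ← starL_apply, ← starL_apply,
      ← map_sub]
  have h0 : coeff (R := A) n (D.star P Q - D.star P' Q) = 0 := by
    rw [key, coeff_X_pow_mul']
    simp
  exact sub_eq_zero.mp (by rwa [map_sub] at h0)

lemma coeff_star_congr_right (n : ℕ) (P Q Q' : PowerSeries A)
    (h : ∀ j ≤ n, coeff (R := A) j Q = coeff (R := A) j Q') :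
    coeff (R := A) n (D.star P Q) = coeff (R := A) n (D.star P Q') := by
  have hdvd : (X : PowerSeries A) ^ (n + 1) ∣ (Q - Q') := by
    rw [X_pow_dvd_iff]
    intro m hm
    simp [h m (Nat.lt_succ_iff.mp hm)]
  obtain ⟨S, hS⟩ := hdvd
  have key : D.star P Q - D.star P Q' = (X : PowerSeries A) ^ (n + 1) * D.star P S := by
    rw [← D.star_xpow_mul (R := R), ← hS, ← starR_apply, ← starR_apply, ← starR_apply,
      ← map_sub]
  have h0 : coeff (R := A) n (D.star P Q - D.star P Q') = 0 := by
    rw [key, coeff_X_pow_mul']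
    simp
  exact sub_eq_zero.mp (by rwa [map_sub] at h0)

lemma coeff_star_left (n : ℕ) (P : PowerSeries A) (c : A) :
    coeff (R := A) n (D.star P (C (R := A) c))
      = ∑ i ∈ Finset.range (n + 1), D.prodCoeff (n - i) (coeff (R := A) i P) c := by
  have h1 : coeff (R := A) n (D.star P (C (R := A) c))
      = coeff (R := A) n (D.star (∑ i ∈ Finset.range (n + 1),
          (X : PowerSeries A) ^ i * C (R := A) (coeff (R := A) i P)) (C (R := A) c)) := by
    apply D.coeff_star_congr_left (R := R)
    intro j hj
    rw [map_sum, Finset.sum_eq_single j]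
    · simp [coeff_X_pow_mul', Nat.sub_self, coeff_C]
    · intro i hi hij
      rw [coeff_X_pow_mul']
      split_ifs with h
      · rw [coeff_C, if_neg]; omega
      · rfl
    · intro hj'
      exact absurd (Finset.mem_range.mpr (Nat.lt_succ_of_le hj)) hj'
  rw [h1, ← starL_apply, map_sum, map_sum]
  apply Finset.sum_congr rfl
  intro i hi
  rw [starL_apply, D.xpow_mul_star (R := R), coeff_X_pow_mul',
    if_pos (Nat.lt_succ_iff.mp (Finset.mem_range.mp hi))]
  rfl

lemma coeff_star_right (n : ℕ) (c : A) (P : PowerSeries A) :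
    coeff (R := A) n (D.star (C (R := A) c) P)
      = ∑ i ∈ Finset.range (n + 1), D.prodCoeff (n - i) c (coeff (R := A) i P) := by
  have h1 : coeff (R := A) n (D.star (C (R := A) c) P)
      = coeff (R := A) n (D.star (C (R := A) c) (∑ i ∈ Finset.range (n + 1),
          (X : PowerSeries A) ^ i * C (R := A) (coeff (R := A) i P))) := by
    apply D.coeff_star_congr_right (R := R)
    intro j hj
    rw [map_sum, Finset.sum_eq_single j]
    · simp [coeff_X_pow_mul', Nat.sub_self, coeff_C]
    · intro i hi hij
      rw [coeff_X_pow_mul']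
      split_ifs with h
      · rw [coeff_C, if_neg]; omega
      · rfl
    · intro hj'
      exact absurd (Finset.mem_range.mpr (Nat.lt_succ_of_le hj)) hj'
  rw [h1, ← starR_apply, map_sum, map_sum]
  apply Finset.sum_congr rfl
  intro i hi
  rw [starR_apply, D.star_xpow_mul (R := R), coeff_X_pow_mul',
    if_pos (Nat.lt_succ_iff.mp (Finset.mem_range.mp hi))]
  rfl

lemma prodCoeff_zero (a b : A) : D.prodCoeff 0 a b = a * b := by
  rw [prodCoeff, coeff_zero_eq_constantCoeff]
  exact D.star_deform a b

lemma assoc_coeff (n : ℕ) (a b c : A) :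
    ∑ i ∈ Finset.range (n + 1), D.prodCoeff (n - i) (D.prodCoeff i a b) c
      = ∑ i ∈ Finset.range (n + 1), D.prodCoeff (n - i) a (D.prodCoeff i b c) := by
  have h := congrArg (coeff (R := A) n) (D.star_assoc (C (R := A) a) (C (R := A) b) (C (R := A) c))
  rwa [D.coeff_star_left (R := R), D.coeff_star_right (R := R)] at h

lemma assoc1 (a b c : A) :
    D.prodCoeff 1 (a * b) c + D.prodCoeff 1 a b * c
      = D.prodCoeff 1 a (b * c) + a * D.prodCoeff 1 b c := by
  have h := D.assoc_coeff (R := R) 1 a b c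
  simp only [Finset.sum_range_succ, Finset.sum_range_zero] at h
  simpa [D.prodCoeff_zero (R := R)] using h

lemma assoc2 (a b c : A) :
    D.prodCoeff 2 (a * b) c + D.prodCoeff 1 (D.prodCoeff 1 a b) c + D.prodCoeff 2 a b * c
      = D.prodCoeff 2 a (b * c) + D.prodCoeff 1 a (D.prodCoeff 1 b c) + a * D.prodCoeff 2 b c := by
  have h := D.assoc_coeff (R := R) 2 a b c
  simp only [Finset.sum_range_succ, Finset.sum_range_zero] at h
  simpa [D.prodCoeff_zero (R := R)] using h

lemma brkt_eq (i : ℕ) (a b : A) :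
    D.brkt i a b = D.prodCoeff i a b - D.prodCoeff i b a := by
  rw [brkt, map_sub]; rfl

lemma prodCoeff_add_left (i : ℕ) (a b c : A) :
    D.prodCoeff i (a + b) c = D.prodCoeff i a c + D.prodCoeff i b c := by
  simp only [prodCoeff, map_add, D.add_star]

lemma prodCoeff_add_right (i : ℕ) (a b c : A) :
    D.prodCoeff i a (b + c) = D.prodCoeff i a b + D.prodCoeff i a c := by
  simp only [prodCoeff, map_add, D.star_add]

lemma zero_star (Q : PowerSeries A) : D.star 0 Q = 0 := by
  have := D.add_star 0 0 Q
  simpa using this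

lemma star_zero (P : PowerSeries A) : D.star P 0 = 0 := by
  have := D.star_add P 0 0
  simpa using this

lemma prodCoeff_sub_left (i : ℕ) (a b c : A) :
    D.prodCoeff i (a - b) c = D.prodCoeff i a c - D.prodCoeff i b c := by
  have h := D.prodCoeff_add_left (R := R) i (a - b) b c
  rw [sub_add_cancel] at h
  exact eq_sub_of_add_eq h.symm

lemma prodCoeff_sub_right (i : ℕ) (a b c : A) :
    D.prodCoeff i a (b - c) = D.prodCoeff i a b - D.prodCoeff i a c := by
  have h := D.prodCoeff_add_right (R := R) i a (b - c) c
  rw [sub_add_cancel] at h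
  exact eq_sub_of_add_eq h.symm

lemma brkt_add_right (i : ℕ) (a b c : A) :
    D.brkt i a (b + c) = D.brkt i a b + D.brkt i a c := by
  simp only [brkt_eq, prodCoeff_add_right, prodCoeff_add_left]
  abel

lemma brkt_sub_right (i : ℕ) (a b c : A) :
    D.brkt i a (b - c) = D.brkt i a b - D.brkt i a c := by
  simp only [brkt_eq, prodCoeff_sub_right, prodCoeff_sub_left]
  abel

lemma brkt_antisymm (i : ℕ) (a b : A) : D.brkt i b a = - D.brkt i a b := by
  simp only [brkt_eq]
  abel

lemma brkt_zero_left (i : ℕ) (a : A) : D.brkt i 0 a = 0 := by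
  simp only [brkt, map_zero, D.zero_star (R := R), D.star_zero (R := R), sub_self]

/-- The first-order bracket with a central element is a derivation. -/
lemma brkt_one_deriv (F : A) (hF : ∀ g : A, g * F = F * g) (b c : A) :
    D.brkt 1 F (b * c) = D.brkt 1 F b * c + b * D.brkt 1 F c := by
  have e1 := D.assoc1 (R := R) F b c
  have e2 := D.assoc1 (R := R) b F c
  have e3 := D.assoc1 (R := R) b c F
  have c1 : D.prodCoeff 1 (b * F) c = D.prodCoeff 1 (F * b) c :=
    congrArg (fun x => D.prodCoeff 1 x c) (hF b)
  have c2 : D.prodCoeff 1 b (c * F) = D.prodCoeff 1 b (F * c) :=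
    congrArg (fun x => D.prodCoeff 1 b x) (hF c)
  have c3 : D.prodCoeff 1 b c * F = F * D.prodCoeff 1 b c := hF (D.prodCoeff 1 b c)
  simp only [brkt_eq]
  linear_combination (norm := noncomm_ring) - e1 + e2 - e3 - c1 - c2 + c3

/-- Second-order Jacobi-type identity for central elements. -/
lemma brkt_one_jacobi (F G : A) (hF : ∀ g : A, g * F = F * g)
    (hG : ∀ g : A, g * G = G * g) (a : A) :
    D.brkt 1 F (D.brkt 1 G a) - D.brkt 1 G (D.brkt 1 F a)
      = D.brkt 1 (D.brkt 1 F G) a + (D.brkt 2 F G * a - a * D.brkt 2 F G) := by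
  have e1 := D.assoc2 (R := R) F G a
  have e2 := D.assoc2 (R := R) F a G
  have e3 := D.assoc2 (R := R) G a F
  have e4 := D.assoc2 (R := R) a G F
  have e5 := D.assoc2 (R := R) G F a
  have e6 := D.assoc2 (R := R) a F G
  rw [← hG a] at e1
  rw [← hF a, hG (D.prodCoeff 2 F a)] at e2
  rw [← hG a, hF (D.prodCoeff 2 G a)] at e3
  rw [hF G, hF (D.prodCoeff 2 a G)] at e4
  rw [hF G, ← hF a] at e5
  rw [hG (D.prodCoeff 2 a F)] at e6
  simp only [brkt_eq, prodCoeff_sub_left, prodCoeff_sub_right]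
  linear_combination (norm := noncomm_ring) - e1 + e2 - e3 + e4 + e5 - e6

end FormalDeformation

/-- with `∂_F = {F0,·}₁ + [F1,·]`, `∂_G = {G0,·}₁ + [G1,·]` and
`K = {F0,G0}₂ + {F1,G0}₁ + {F0,G1}₁ + [F1,G1]`, one has
`[∂_F, ∂_G] = {{F0,G0}₁, ·}₁ + [K, ·]`; and if `{F0,G0}₁ = 0` and `K ∈ Z(A)`
(i.e. `F` and `G` are in involution) then `∂_F` and `∂_G` commute and
`∂_F(G0) = 0 = ∂_G(F0)`. -/
theorem commutator_of_hamiltonian_derivations {R A : Type*} [CommRing R] [Ring A]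
    [Algebra R A] (D : FormalDeformation R A) (F0 G0 F1 G1 : A)
    (hF0 : F0 ∈ Set.center A) (hG0 : G0 ∈ Set.center A) :
    (∀ a : A,
      D.ham F0 F1 (D.ham G0 G1 a) - D.ham G0 G1 (D.ham F0 F1 a)
        = D.ham (D.brkt 1 F0 G0)
            (D.brkt 2 F0 G0 + D.brkt 1 F1 G0 + D.brkt 1 F0 G1 + (F1 * G1 - G1 * F1)) a) ∧
    (D.brkt 1 F0 G0 = 0 →
      (D.brkt 2 F0 G0 + D.brkt 1 F1 G0 + D.brkt 1 F0 G1 + (F1 * G1 - G1 * F1))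
        ∈ Set.center A →
      (∀ a : A, D.ham F0 F1 (D.ham G0 G1 a) = D.ham G0 G1 (D.ham F0 F1 a)) ∧
      D.ham F0 F1 G0 = 0 ∧ D.ham G0 G1 F0 = 0) := by
  have hF' : ∀ g : A, g * F0 = F0 * g := fun g => ((Set.mem_center_iff.mp hF0).comm g).symm
  have hG' : ∀ g : A, g * G0 = G0 * g := fun g => ((Set.mem_center_iff.mp hG0).comm g).symm
  have main : ∀ a : A,
      D.ham F0 F1 (D.ham G0 G1 a) - D.ham G0 G1 (D.ham F0 F1 a)
        = D.ham (D.brkt 1 F0 G0)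
            (D.brkt 2 F0 G0 + D.brkt 1 F1 G0 + D.brkt 1 F0 G1 + (F1 * G1 - G1 * F1)) a := by
    intro a
    have jac := D.brkt_one_jacobi (R := R) F0 G0 hF' hG' a
    have d1 := D.brkt_one_deriv (R := R) F0 hF' G1 a
    have d2 := D.brkt_one_deriv (R := R) F0 hF' a G1
    have d3 := D.brkt_one_deriv (R := R) G0 hG' F1 a
    have d4 := D.brkt_one_deriv (R := R) G0 hG' a F1
    have anti : D.brkt 1 G0 F1 = - D.brkt 1 F1 G0 := D.brkt_antisymm (R := R) 1 F1 G0
    have l1 : D.brkt 1 F0 (D.brkt 1 G0 a + (G1 * a - a * G1))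
        = D.brkt 1 F0 (D.brkt 1 G0 a) + D.brkt 1 F0 (G1 * a) - D.brkt 1 F0 (a * G1) := by
      rw [D.brkt_add_right (R := R), D.brkt_sub_right (R := R)]
      abel
    have l2 : D.brkt 1 G0 (D.brkt 1 F0 a + (F1 * a - a * F1))
        = D.brkt 1 G0 (D.brkt 1 F0 a) + D.brkt 1 G0 (F1 * a) - D.brkt 1 G0 (a * F1) := by
      rw [D.brkt_add_right (R := R), D.brkt_sub_right (R := R)]
      abel
    simp only [FormalDeformation.ham]
    linear_combination (norm := noncomm_ring)
      l1 - l2 + jac + d1 - d2 - d3 + d4 - anti * a + a * anti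
  refine ⟨main, fun h0 hKc => ⟨?_, ?_, ?_⟩⟩
  · intro a
    have h := main a
    rw [h0] at h
    have hK := ((Set.mem_center_iff.mp hKc).comm a).symm
    have hz : D.ham 0
        (D.brkt 2 F0 G0 + D.brkt 1 F1 G0 + D.brkt 1 F0 G1 + (F1 * G1 - G1 * F1)) a = 0 := by
      rw [FormalDeformation.ham, D.brkt_zero_left (R := R), hK]
      abel
    rw [hz] at h
    exact sub_eq_zero.mp h
  · rw [FormalDeformation.ham, h0, hG' F1]
    abel
  · rw [FormalDeformation.ham, D.brkt_antisymm (R := R) 1 F0 G0, h0, hF' G1]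
    abel
end

section
/- Let (A[[ν]],⋆) and (A'[[ν]],⋆') be formal deformations of associative unital R-algebras A and A', and let F : A[[ν]] → A'[[ν]] be a morphism of unital R[[ν]]-algebras from (A[[ν]],⋆) to (A'[[ν]],⋆'). Write F(a) = F0(a) + νF1(a) + ν²F2(a) + ⋯ for a ∈ A, defining R-linear maps F_i : A → A'. If F0(Z(A)) ⊆ Z(A'), then F(H_ν) ⊆ H'_ν, and F0 restricted to centers is a morphism of reduced Poisson algebras: for all a, b ∈ Z(A), F0({a,b}_1) = {F0(a), F0(b)}'_1, where {·,·}'_1 is the first-order bracket of ⋆'. -/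
open PowerSeries

section Aux

variable {R A : Type*} [CommRing R] [Ring A] [Algebra R A]

private lemma exists_decomp' (P : PowerSeries A) :
    ∃ P', P = C (R := A) (coeff (R := A) 0 P) + X * P' := by
  have h : X ∣ (P - C (R := A) (coeff (R := A) 0 P)) := by
    rw [PowerSeries.X_dvd_iff]
    simp
  obtain ⟨P', hP⟩ := h
  exact ⟨P', by rw [← hP]; abel⟩

namespace FormalDeformation

private lemma X_star' (D : FormalDeformation R A) (P Q : PowerSeries A) :
    D.star (X * P) Q = X * D.star P Q := by
  have h := D.smul_star X P Q
  rwa [PowerSeries.map_X] at h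

private lemma star_X' (D : FormalDeformation R A) (P Q : PowerSeries A) :
    D.star P (X * Q) = X * D.star P Q := by
  have h := D.star_smul X P Q
  rwa [PowerSeries.map_X] at h

private lemma coeff_zero_star (D : FormalDeformation R A) (P Q : PowerSeries A) :
    coeff (R := A) 0 (D.star P Q) = coeff (R := A) 0 P * coeff (R := A) 0 Q := by
  obtain ⟨P', hP⟩ := exists_decomp' P
  obtain ⟨Q', hQ⟩ := exists_decomp' Q
  conv_lhs => rw [hP, hQ]
  simp only [D.add_star, D.star_add, D.X_star', D.star_X']
  simp [coeff_zero_eq_constantCoeff, D.star_deform]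

private lemma coeff_one_star (D : FormalDeformation R A) (P Q : PowerSeries A) :
    coeff (R := A) 1 (D.star P Q) = D.prodCoeff 1 (coeff (R := A) 0 P) (coeff (R := A) 0 Q)
      + coeff (R := A) 0 P * coeff (R := A) 1 Q + coeff (R := A) 1 P * coeff (R := A) 0 Q := by
  obtain ⟨P', hP⟩ := exists_decomp' P
  obtain ⟨Q', hQ⟩ := exists_decomp' Q
  have hP1 : coeff (R := A) 1 P = coeff (R := A) 0 P' := by
    conv_lhs => rw [hP]
    rw [map_add]
    rw [show (1 : ℕ) = 0 + 1 from rfl, coeff_succ_X_mul]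
    simp
  have hQ1 : coeff (R := A) 1 Q = coeff (R := A) 0 Q' := by
    conv_lhs => rw [hQ]
    rw [map_add]
    rw [show (1 : ℕ) = 0 + 1 from rfl, coeff_succ_X_mul]
    simp
  conv_lhs => rw [hP, hQ]
  simp only [D.add_star, D.star_add, D.X_star', D.star_X']
  rw [map_add, map_add, map_add]
  rw [show (1 : ℕ) = 0 + 1 from rfl, coeff_succ_X_mul, coeff_succ_X_mul, coeff_succ_X_mul]
  rw [D.coeff_zero_star, D.coeff_zero_star, hP1, hQ1]
  simp only [prodCoeff, coeff_zero_eq_constantCoeff, constantCoeff_C]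
  have hx : constantCoeff (R := A) (X * D.star P' Q') = 0 := by
    rw [map_mul, constantCoeff_X, zero_mul]
  rw [hx]
  abel

end FormalDeformation

end Aux

/-- if `F : (A⟦ν⟧,⋆) → (A'⟦ν⟧,⋆')` is a morphism of unital `R⟦ν⟧`-algebras
between two formal deformations and `F₀(Z(A)) ⊆ Z(A')` (where `Fᵢ(a)` is the coefficient of
`νⁱ` in `F(a)` for `a ∈ A`), then `F(H_ν) ⊆ H'_ν` and `F₀` restricted to the centers is a
morphism of reduced Poisson algebras: `F₀({a,b}₁) = {F₀(a), F₀(b)}'₁` for `a, b ∈ Z(A)`. -/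
theorem morphism_reduced_poisson {R A A' : Type*} [CommRing R] [Ring A] [Algebra R A]
    [Ring A'] [Algebra R A'] (D : FormalDeformation R A) (D' : FormalDeformation R A')
    (F : PowerSeries A → PowerSeries A')
    (hadd : ∀ P Q, F (P + Q) = F P + F Q)
    (hmul : ∀ P Q, F (D.star P Q) = D'.star (F P) (F Q))
    (hone : F 1 = 1)
    (hlin : ∀ (c : PowerSeries R) (P : PowerSeries A),
      F (PowerSeries.map (algebraMap R A) c * P)
        = PowerSeries.map (algebraMap R A') c * F P)
    (hF0 : ∀ a : A, a ∈ Set.center A → coeff (R := A') 0 (F (C (R := A) a)) ∈ Set.center A') :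
    (∀ P : PowerSeries A, P ∈ Hnu A → F P ∈ Hnu A') ∧
    (∀ a b : A, a ∈ Set.center A → b ∈ Set.center A →
      coeff (R := A') 0 (F (C (R := A) (D.brkt 1 a b)))
        = D'.brkt 1 (coeff (R := A') 0 (F (C (R := A) a))) (coeff (R := A') 0 (F (C (R := A) b)))) := by
  -- basic consequences of additivity
  have hzero : F 0 = 0 := by
    have h := hadd 0 0
    rw [add_zero] at h
    have h2 : F 0 + 0 = F 0 + F 0 := by rw [add_zero]; exact h
    exact (add_left_cancel h2).symm
  have hneg : ∀ P, F (-P) = - F P := by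
    intro P
    have h : F P + F (-P) = 0 := by rw [← hadd, add_neg_cancel, hzero]
    exact eq_neg_of_add_eq_zero_right h
  have hsub : ∀ P Q, F (P - Q) = F P - F Q := by
    intro P Q
    rw [sub_eq_add_neg, hadd, hneg, sub_eq_add_neg]
  have hXF : ∀ P, F (X * P) = X * F P := by
    intro P
    have h := hlin X P
    rwa [PowerSeries.map_X, PowerSeries.map_X] at h
  have coeff0F : ∀ P, coeff (R := A') 0 (F P) = coeff (R := A') 0 (F (C (R := A) (coeff (R := A) 0 P))) := by
    intro P
    obtain ⟨P', hP⟩ := exists_decomp' P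
    conv_lhs => rw [hP]
    rw [hadd, hXF, map_add]
    have hx : coeff (R := A') 0 (X * F P') = 0 := by
      rw [coeff_zero_eq_constantCoeff, map_mul, constantCoeff_X, zero_mul]
    rw [hx, add_zero]
  have coeff1F : ∀ P, coeff (R := A') 1 (F P)
      = coeff (R := A') 1 (F (C (R := A) (coeff (R := A) 0 P))) + coeff (R := A') 0 (F (C (R := A) (coeff (R := A) 1 P))) := by
    intro P
    obtain ⟨P', hP⟩ := exists_decomp' P
    have hP1 : coeff (R := A) 1 P = coeff (R := A) 0 P' := by
      conv_lhs => rw [hP]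
      rw [map_add, show (1 : ℕ) = 0 + 1 from rfl, coeff_succ_X_mul]
      simp
    conv_lhs => rw [hP]
    rw [hadd, hXF, map_add, show (1 : ℕ) = 0 + 1 from rfl, coeff_succ_X_mul]
    rw [coeff0F P', hP1]
  constructor
  · intro P hP
    have hP' : coeff (R := A) 0 P ∈ Set.center A := by
      rw [coeff_zero_eq_constantCoeff]; exact hP
    show constantCoeff (R := A') (F P) ∈ Set.center A'
    simp only [← coeff_zero_eq_constantCoeff]
    rw [coeff0F]
    exact hF0 _ hP'
  · intro a b ha hb
    have hcomm : ∀ g : A, g * a = a * g := fun g => ((Set.mem_center_iff.mp ha).comm g).symm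
    set α0 := coeff (R := A') 0 (F (C (R := A) a)) with hα0
    set β0 := coeff (R := A') 0 (F (C (R := A) b)) with hβ0
    have hα : α0 ∈ Set.center A' := hF0 a ha
    have hβ : β0 ∈ Set.center A' := hF0 b hb
    have hαc : ∀ g : A', g * α0 = α0 * g := fun g => ((Set.mem_center_iff.mp hα).comm g).symm
    have hβc : ∀ g : A', g * β0 = β0 * g := fun g => ((Set.mem_center_iff.mp hβ).comm g).symm
    set G := D.star (C (R := A) a) (C (R := A) b) with hG
    set H := D.star (C (R := A) b) (C (R := A) a) with hH
    have hG0 : coeff (R := A) 0 G = a * b := by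
      rw [hG, D.coeff_zero_star]; simp [coeff_zero_eq_constantCoeff]
    have hH0 : coeff (R := A) 0 H = a * b := by
      rw [hH, D.coeff_zero_star]; simp [coeff_zero_eq_constantCoeff]
      exact hcomm b
    have hbrkt : D.brkt 1 a b = coeff (R := A) 1 G - coeff (R := A) 1 H := by
      rw [FormalDeformation.brkt, map_sub]
    -- left-hand side computation via F-expansion
    have hLHS : coeff (R := A') 1 (F G) - coeff (R := A') 1 (F H)
        = coeff (R := A') 0 (F (C (R := A) (D.brkt 1 a b))) := by
      rw [coeff1F G, coeff1F H, hG0, hH0, hbrkt]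
      have : C (R := A) (coeff (R := A) 1 G - coeff (R := A) 1 H) = C (R := A) (coeff (R := A) 1 G) - C (R := A) (coeff (R := A) 1 H) := by
        rw [map_sub]
      rw [this, hsub, map_sub]
      abel
    -- right-hand side computation via the deformation D'
    have hα1 : coeff (R := A') 0 (F (C (R := A) a)) = α0 := rfl
    have hβ1 : coeff (R := A') 0 (F (C (R := A) b)) = β0 := rfl
    have hFG : coeff (R := A') 1 (F G) = D'.prodCoeff 1 α0 β0
        + α0 * coeff (R := A') 1 (F (C (R := A) b)) + coeff (R := A') 1 (F (C (R := A) a)) * β0 := by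
      rw [hG, hmul, D'.coeff_one_star, hα1, hβ1]
    have hFH : coeff (R := A') 1 (F H) = D'.prodCoeff 1 β0 α0
        + β0 * coeff (R := A') 1 (F (C (R := A) a)) + coeff (R := A') 1 (F (C (R := A) b)) * α0 := by
      rw [hH, hmul, D'.coeff_one_star, hα1, hβ1]
    have hbrkt' : D'.brkt 1 α0 β0 = D'.prodCoeff 1 α0 β0 - D'.prodCoeff 1 β0 α0 := by
      rw [FormalDeformation.brkt, map_sub]; rfl
    rw [← hLHS, hFG, hFH, hbrkt']
    rw [hαc (coeff (R := A') 1 (F (C (R := A) b))), hβc (coeff (R := A') 1 (F (C (R := A) a)))]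
    abel
end

section
/- Let N > 2 be odd, let n ≥ 2 and let ξ ∈ ℂ be a primitive n-th root of unity. Let A be the quotient of the free associative ℂ-algebra ℂ⟨x_1,…,x_N⟩ by the two-sided ideal generated by the elements x_{i+1}x_i − ξ·x_i x_{i+1} for i = 1,…,N (indices taken modulo N, so that in particular x_1 x_N − ξ·x_N x_1 is among the generators) and x_i x_j − x_j x_i for all pairs with d_N(i,j) ≠ 1, where d_N(i,j) := min(|i−j|, N−|i−j|). Then the center of A equals the unital ℂ-subalgebra generated by x_1^n, x_2^n, …, x_N^n together with the product x_1 x_2 ⋯ x_N. -/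
/-- The defining relations of the quantisation of the `N`-periodic Volterra chain,
evaluated at `ξ`: on the free associative unital `ℂ`-algebra on generators
`x_i`, `i ∈ ℤ/N`, neighbouring generators `ξ`-commute, `x_{i+1} x_i = ξ·x_i x_{i+1}`
(indices mod `N`, so this includes `x_1 x_N = ξ·x_N x_1`), and all pairs at cyclic
distance `≠ 1` commute. -/
inductive VolterraRel (N : ℕ) (ξ : ℂ) :
    FreeAlgebra ℂ (ZMod N) → FreeAlgebra ℂ (ZMod N) → Prop
  | qcomm (i : ZMod N) :
      VolterraRel N ξ (FreeAlgebra.ι ℂ (i + 1) * FreeAlgebra.ι ℂ i)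
        (ξ • (FreeAlgebra.ι ℂ i * FreeAlgebra.ι ℂ (i + 1)))
  | comm (i j : ZMod N) (h1 : j ≠ i + 1) (h2 : i ≠ j + 1) :
      VolterraRel N ξ (FreeAlgebra.ι ℂ i * FreeAlgebra.ι ℂ j)
        (FreeAlgebra.ι ℂ j * FreeAlgebra.ι ℂ i)

/-- The quantum Volterra algebra at `ξ`. -/
abbrev VolterraAlgebra (N : ℕ) (ξ : ℂ) := RingQuot (VolterraRel N ξ)

/-- The image of the generator `x_i` in the quantum Volterra algebra. -/
noncomputable def volterraGen (N : ℕ) (ξ : ℂ) (i : ZMod N) : VolterraAlgebra N ξ :=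
  RingQuot.mkAlgHom ℂ (VolterraRel N ξ) (FreeAlgebra.ι ℂ i)
noncomputable section
namespace VoltAux
open Finsupp

variable (N : ℕ) (ξ : ℂ)

abbrev MM (N : ℕ) := ZMod N →₀ ℕ

def ee (i : ZMod N) : MM N := Finsupp.single i 1

def TT (i : ZMod N) : Module.End ℂ ((MM N) →₀ ℂ) :=
  Finsupp.lsum ℂ fun a => (ξ ^ (a (i - 1))) • Finsupp.lsingle (a + ee N i)

def dd (a : MM N) : (MM N) →₀ ℂ := Finsupp.single a (1 : ℂ)

lemma TT_single (i : ZMod N) (a : MM N) (b : ℂ) :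
    TT N ξ i (Finsupp.single a b) = ξ ^ (a (i - 1)) • Finsupp.single (a + ee N i) b := by
  simp [TT]

lemma TT_dd (i : ZMod N) (a : MM N) :
    TT N ξ i (dd N a) = ξ ^ (a (i - 1)) • dd N (a + ee N i) := TT_single N ξ i a 1

lemma ee_apply_ne (i j : ZMod N) (h : i ≠ j) : ee N i j = 0 := by
  simp [ee, Finsupp.single_apply, h]

lemma ee_apply_self (i : ZMod N) : ee N i i = 1 := by simp [ee]

lemma two_ne_zero' (hN : 2 < N) : (2 : ZMod N) ≠ 0 := by
  haveI : NeZero N := ⟨by omega⟩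
  intro h
  have : ((2:ℕ) : ZMod N) = 0 := by exact_mod_cast h
  rw [ZMod.natCast_eq_zero_iff] at this
  have := Nat.le_of_dvd (by norm_num) this
  omega

lemma one_ne_zero' (hN : 2 < N) : (1 : ZMod N) ≠ 0 := by
  haveI : NeZero N := ⟨by omega⟩
  intro h
  have : ((1:ℕ) : ZMod N) = 0 := by exact_mod_cast h
  rw [ZMod.natCast_eq_zero_iff] at this
  have := Nat.le_of_dvd (by norm_num) this
  omega

lemma sub_one_ne (hN : 2 < N) (i : ZMod N) : i - 1 ≠ i := by
  intro h
  exact one_ne_zero' N hN (sub_eq_self.mp h)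

lemma TT_qcomm (hN : 2 < N) (i : ZMod N) :
    TT N ξ (i + 1) * TT N ξ i = ξ • (TT N ξ i * TT N ξ (i + 1)) := by
  apply Finsupp.lhom_ext
  intro a b
  have h2 : (2 : ZMod N) ≠ 0 := two_ne_zero' N hN
  have key1 : (a + ee N i) ((i+1) - 1) = a i + 1 := by
    simp [ee, Finsupp.add_apply]
  have key2 : (a + ee N (i+1)) (i - 1) = a (i - 1) := by
    rw [Finsupp.add_apply, ee_apply_ne, add_zero]
    intro h
    apply h2
    have : i + 1 - (i - 1) = 0 := by rw [h]; ring
    calc (2 : ZMod N) = i + 1 - (i-1) := by ring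
    _ = 0 := this
  rw [Module.End.mul_apply, LinearMap.smul_apply, Module.End.mul_apply,
    TT_single, map_smul, TT_single, TT_single, map_smul, TT_single]
  rw [key1, key2, add_sub_cancel_right, smul_smul, smul_smul, smul_smul]
  congr 1
  · ring
  · congr 1
    abel

lemma TT_comm (i j : ZMod N) (h1 : j ≠ i + 1) (h2 : i ≠ j + 1) :
    TT N ξ i * TT N ξ j = TT N ξ j * TT N ξ i := by
  apply Finsupp.lhom_ext
  intro a b
  have key1 : (a + ee N j) (i - 1) = a (i - 1) := by
    rw [Finsupp.add_apply, ee_apply_ne, add_zero]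
    intro h; apply h2; rw [h]; ring
  have key2 : (a + ee N i) (j - 1) = a (j - 1) := by
    rw [Finsupp.add_apply, ee_apply_ne, add_zero]
    intro h; apply h1; rw [h]; ring
  rw [Module.End.mul_apply, Module.End.mul_apply, TT_single, TT_single, map_smul, map_smul,
    TT_single, TT_single, key1, key2, smul_smul, smul_smul]
  congr 1
  · ring
  · congr 1
    abel

def phi (hN : 2 < N) : VolterraAlgebra N ξ →ₐ[ℂ] Module.End ℂ ((MM N) →₀ ℂ) :=
  RingQuot.liftAlgHom ℂ ⟨FreeAlgebra.lift ℂ (TT N ξ), by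
    rintro x y (⟨i⟩ | ⟨i, j, h1, h2⟩)
    · simp only [map_mul, map_smul, FreeAlgebra.lift_ι_apply]
      exact TT_qcomm N ξ hN i
    · simp only [map_mul, FreeAlgebra.lift_ι_apply]
      exact TT_comm N ξ i j h1 h2⟩

lemma phi_gen (hN : 2 < N) (i : ZMod N) :
    phi N ξ hN (volterraGen N ξ i) = TT N ξ i := by
  rw [volterraGen, phi, RingQuot.liftAlgHom_mkAlgHom_apply, FreeAlgebra.lift_ι_apply]

def wordProd (l : List (ZMod N)) : VolterraAlgebra N ξ := (l.map (volterraGen N ξ)).prod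

def sWord (l : List (ZMod N)) : MM N := (l.map (ee N)).sum

def cWord : List (ZMod N) → MM N → ℕ
  | [], _ => 0
  | j :: t, v => cWord t v + (v + sWord N t) (j - 1)

@[simp] lemma wordProd_nil : wordProd N ξ [] = 1 := rfl

lemma wordProd_cons (j : ZMod N) (t : List (ZMod N)) :
    wordProd N ξ (j :: t) = volterraGen N ξ j * wordProd N ξ t := by
  simp [wordProd]

lemma wordProd_append (l₁ l₂ : List (ZMod N)) :
    wordProd N ξ (l₁ ++ l₂) = wordProd N ξ l₁ * wordProd N ξ l₂ := by
  simp [wordProd]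

@[simp] lemma sWord_nil : sWord N [] = 0 := rfl

lemma sWord_cons (j : ZMod N) (t : List (ZMod N)) :
    sWord N (j :: t) = ee N j + sWord N t := by simp [sWord]

lemma sWord_append (l₁ l₂ : List (ZMod N)) :
    sWord N (l₁ ++ l₂) = sWord N l₁ + sWord N l₂ := by simp [sWord]

lemma phi_word (hN : 2 < N) (l : List (ZMod N)) (v : MM N) :
    phi N ξ hN (wordProd N ξ l) (dd N v)
      = ξ ^ (cWord N l v) • dd N (v + sWord N l) := by
  induction l with
  | nil => simp [cWord]
  | cons j t ih =>
    rw [wordProd_cons, map_mul, Module.End.mul_apply, ih, map_smul, phi_gen, TT_dd,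
      smul_smul, ← pow_add]
    have : cWord N (j :: t) v = cWord N t v + (v + sWord N t) (j - 1) := rfl
    rw [this]
    congr 1
    rw [sWord_cons]
    abel

lemma rel_qcomm (i : ZMod N) :
    volterraGen N ξ (i + 1) * volterraGen N ξ i
      = ξ • (volterraGen N ξ i * volterraGen N ξ (i + 1)) := by
  have := RingQuot.mkAlgHom_rel ℂ (VolterraRel.qcomm (N := N) (ξ := ξ) i)
  simpa [map_mul, volterraGen] using this

lemma rel_comm (i j : ZMod N) (h1 : j ≠ i + 1) (h2 : i ≠ j + 1) :
    volterraGen N ξ i * volterraGen N ξ j = volterraGen N ξ j * volterraGen N ξ i := by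
  have := RingQuot.mkAlgHom_rel ℂ (VolterraRel.comm (N := N) (ξ := ξ) i j h1 h2)
  simpa [map_mul, volterraGen] using this

variable {n : ℕ}

lemma gen_swap (hone : ξ ^ n = 1) (hn1 : n ≠ 0) (i j : ZMod N) :
    ∃ m : ℕ, volterraGen N ξ j * volterraGen N ξ i
      = ξ ^ m • (volterraGen N ξ i * volterraGen N ξ j) := by
  by_cases h1 : j = i + 1
  · subst h1
    exact ⟨1, by simpa [pow_one] using rel_qcomm N ξ i⟩
  by_cases h2 : i = j + 1
  · subst h2
    refine ⟨n - 1, ?_⟩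
    rw [rel_qcomm N ξ j, smul_smul, ← pow_succ]
    have : n - 1 + 1 = n := by omega
    rw [this, hone, one_smul]
  · exact ⟨0, by rw [pow_zero, one_smul, rel_comm N ξ i j h1 h2]⟩

lemma word_swap (hone : ξ ^ n = 1) (hn1 : n ≠ 0) (l : List (ZMod N)) (j : ZMod N) :
    ∃ m : ℕ, volterraGen N ξ j * wordProd N ξ l
      = ξ ^ m • (wordProd N ξ l * volterraGen N ξ j) := by
  induction l with
  | nil => exact ⟨0, by simp⟩
  | cons x t ih =>
    obtain ⟨m₁, h₁⟩ := ih
    obtain ⟨m₂, h₂⟩ := gen_swap N ξ hone hn1 x j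
    refine ⟨m₂ + m₁, ?_⟩
    rw [wordProd_cons, ← mul_assoc, h₂, smul_mul_assoc, mul_assoc, h₁, mul_smul_comm,
      smul_smul, ← pow_add, ← mul_assoc]

def listRep (a : MM N) : List (ZMod N) :=
  (List.range N).flatMap fun k => List.replicate (a ((k + 1 : ℕ) : ZMod N)) ((k + 1 : ℕ) : ZMod N)

def mono (a : MM N) : VolterraAlgebra N ξ := wordProd N ξ (listRep N a)

lemma wordProd_replicate (m : ℕ) (i : ZMod N) :
    wordProd N ξ (List.replicate m i) = volterraGen N ξ i ^ m := by
  simp [wordProd, List.map_replicate, List.prod_replicate]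

lemma sWord_replicate (m : ℕ) (i : ZMod N) :
    sWord N (List.replicate m i) = Finsupp.single i m := by
  induction m with
  | zero => simp
  | succ k ih =>
    rw [List.replicate_succ, sWord_cons, ih, ee]
    rw [← Finsupp.single_add, add_comm]

@[simp] lemma mono_zero : mono N ξ 0 = 1 := by
  have : listRep N (0 : MM N) = [] := by
    simp [listRep]
  rw [mono, this, wordProd_nil]

lemma cast_val_succ (hN : 2 < N) (j : ZMod N) :
    (((j - 1).val + 1 : ℕ) : ZMod N) = j := by
  haveI : NeZero N := ⟨by omega⟩
  push_cast
  rw [ZMod.natCast_rightInverse (j - 1)]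
  ring

lemma cast_inj_range (hN : 2 < N) {k k' : ℕ} (hk : k < N) (hk' : k' < N)
    (h : ((k + 1 : ℕ) : ZMod N) = ((k' + 1 : ℕ) : ZMod N)) : k = k' := by
  rw [ZMod.natCast_eq_natCast_iff] at h
  unfold Nat.ModEq at h
  rcases Nat.lt_or_ge (k + 1) N with h1 | h1
  · rcases Nat.lt_or_ge (k' + 1) N with h2 | h2
    · rwa [Nat.mod_eq_of_lt h1, Nat.mod_eq_of_lt h2, Nat.succ_inj] at h
    · have hk'N : k' + 1 = N := by omega
      rw [Nat.mod_eq_of_lt h1, hk'N, Nat.mod_self] at h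
      omega
  · have hkN : k + 1 = N := by omega
    rcases Nat.lt_or_ge (k' + 1) N with h2 | h2
    · rw [Nat.mod_eq_of_lt h2, hkN, Nat.mod_self] at h
      omega
    · omega

def blockF (a : MM N) (k : ℕ) : List (ZMod N) :=
  List.replicate (a ((k + 1 : ℕ) : ZMod N)) ((k + 1 : ℕ) : ZMod N)

lemma listRep_eq (a : MM N) : listRep N a = (List.range N).flatMap (blockF N a) := rfl

lemma listRep_decomp (hN : 2 < N) (a : MM N) (j : ZMod N) :
    ∃ L₁ L₂ : List (ZMod N),
      listRep N a = L₁ ++ (List.replicate (a j) j ++ L₂) ∧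
      listRep N (a + ee N j) = L₁ ++ (List.replicate (a j + 1) j ++ L₂) := by
  haveI : NeZero N := ⟨by omega⟩
  set p := (j - 1).val with hp_def
  have hp : p < N := ZMod.val_lt (j - 1)
  have hj : ((p + 1 : ℕ) : ZMod N) = j := cast_val_succ N hN j
  have hsplit : List.range N
      = List.range p ++ (p :: (List.range (N - p - 1)).map (fun x => p + (1 + x))) := by
    have h1 : N = p + (N - p) := by omega
    have h2 : N - p = 1 + (N - p - 1) := by omega
    conv_lhs => rw [h1, List.range_add, h2, List.range_add]
    simp [List.range_succ]
    omega
  have hne1 : ∀ k ∈ List.range p, ((k + 1 : ℕ) : ZMod N) ≠ j := by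
    intro k hk
    rw [List.mem_range] at hk
    intro h
    rw [← hj] at h
    have := cast_inj_range N hN (by omega) hp h
    omega
  have hne2 : ∀ k ∈ (List.range (N - p - 1)).map (fun x => p + (1 + x)),
      ((k + 1 : ℕ) : ZMod N) ≠ j := by
    intro k hk
    rw [List.mem_map] at hk
    obtain ⟨x, hx, rfl⟩ := hk
    rw [List.mem_range] at hx
    intro h
    rw [← hj] at h
    have := cast_inj_range N hN (by omega) hp h
    omega
  have hbeq : ∀ (b : MM N), (∀ u, u ≠ j → b u = a u) →
      listRep N b
        = (List.range p).flatMap (blockF N a)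
          ++ (List.replicate (b j) j
            ++ ((List.range (N - p - 1)).map (fun x => p + (1 + x))).flatMap (blockF N a)) := by
    intro b hb
    have hfeq : ∀ (l : List ℕ), (∀ k ∈ l, ((k + 1 : ℕ) : ZMod N) ≠ j) →
        l.flatMap (blockF N b) = l.flatMap (blockF N a) := by
      intro l hl
      rw [List.flatMap_def, List.flatMap_def]
      congr 1
      apply List.map_congr_left
      intro k hk
      unfold blockF
      rw [hb _ (hl k hk)]
    rw [listRep_eq, hsplit, List.flatMap_append, List.flatMap_cons]
    rw [hfeq _ hne1, hfeq _ hne2]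
    congr 2
    unfold blockF
    rw [hj]
  refine ⟨(List.range p).flatMap (blockF N a),
    ((List.range (N - p - 1)).map (fun x => p + (1 + x))).flatMap (blockF N a), ?_, ?_⟩
  · exact hbeq a (fun _ _ => rfl)
  · have := hbeq (a + ee N j) (by
      intro u hu
      rw [Finsupp.add_apply, ee_apply_ne N j u (fun h => hu h.symm), add_zero])
    rw [this, Finsupp.add_apply, ee_apply_self]

lemma gen_mul_mono (hN : 2 < N) (hone : ξ ^ n = 1) (hn1 : n ≠ 0) (a : MM N) (j : ZMod N) :
    ∃ m : ℕ, volterraGen N ξ j * mono N ξ a = ξ ^ m • mono N ξ (a + ee N j) := by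
  obtain ⟨L₁, L₂, hA, hB⟩ := listRep_decomp N hN a j
  obtain ⟨m, hm⟩ := word_swap N ξ hone hn1 L₁ j
  refine ⟨m, ?_⟩
  rw [mono, mono, hA, hB, wordProd_append, wordProd_append, wordProd_append,
    wordProd_append, wordProd_replicate, wordProd_replicate, ← mul_assoc, hm,
    smul_mul_assoc, mul_assoc, ← mul_assoc (volterraGen N ξ j), ← pow_succ',
    ← mul_assoc]

lemma list_sum_range {α : Type*} [AddCommMonoid α] (f : ℕ → α) (q : ℕ) :
    ((List.range q).map f).sum = ∑ i ∈ Finset.range q, f i := by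
  induction q with
  | zero => simp
  | succ k ih => rw [List.range_succ, List.map_append, List.sum_append, Finset.sum_range_succ, ih]; simp

lemma sWord_flatMap (l : List ℕ) (f : ℕ → List (ZMod N)) :
    sWord N (l.flatMap f) = ((l.map fun k => sWord N (f k)).sum) := by
  induction l with
  | nil => simp
  | cons x t ih => rw [List.flatMap_cons, sWord_append, ih, List.map_cons, List.sum_cons]

lemma sWord_listRep (hN : 2 < N) (a : MM N) : sWord N (listRep N a) = a := by
  haveI : NeZero N := ⟨by omega⟩
  ext u
  rw [listRep_eq, sWord_flatMap]
  have h1 : (List.range N).map (fun k => sWord N (blockF N a k))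
      = (List.range N).map
          (fun k => Finsupp.single ((k + 1 : ℕ) : ZMod N) (a ((k + 1 : ℕ) : ZMod N))) := by
    apply List.map_congr_left
    intro k _
    rw [blockF, sWord_replicate]
  rw [h1, list_sum_range, Finsupp.finset_sum_apply]
  set p := (u - 1).val with hp_def
  have hp : p < N := ZMod.val_lt (u - 1)
  have hj : ((p + 1 : ℕ) : ZMod N) = u := cast_val_succ N hN u
  have h2 : ∀ k ∈ Finset.range N,
      (Finsupp.single ((k + 1 : ℕ) : ZMod N) (a ((k + 1 : ℕ) : ZMod N))) u
        = if k = p then a u else 0 := by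
    intro k hk
    rw [Finset.mem_range] at hk
    by_cases h : k = p
    · subst h
      rw [hj, if_pos rfl, Finsupp.single_eq_same]
    · rw [if_neg h, Finsupp.single_apply, if_neg]
      intro hc
      exact h (cast_inj_range N hN hk hp (by rw [hc, hj]))
  rw [Finset.sum_congr rfl h2, Finset.sum_ite_eq' (Finset.range N) p (fun _ => a u),
    if_pos (Finset.mem_range.mpr hp)]

lemma word_mul_mono (hN : 2 < N) (hone : ξ ^ n = 1) (hn1 : n ≠ 0)
    (l : List (ZMod N)) (b : MM N) :
    ∃ m : ℕ, wordProd N ξ l * mono N ξ b = ξ ^ m • mono N ξ (sWord N l + b) := by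
  induction l with
  | nil => exact ⟨0, by simp⟩
  | cons j t ih =>
    obtain ⟨m₁, h₁⟩ := ih
    obtain ⟨m₂, h₂⟩ := gen_mul_mono N ξ hN hone hn1 (sWord N t + b) j
    refine ⟨m₁ + m₂, ?_⟩
    have hidx : sWord N t + b + ee N j = sWord N (j :: t) + b := by
      rw [sWord_cons]; abel
    rw [wordProd_cons, mul_assoc, h₁, mul_smul_comm, h₂, smul_smul, ← pow_add, hidx]

lemma straighten (hN : 2 < N) (hone : ξ ^ n = 1) (hn1 : n ≠ 0) (l : List (ZMod N)) :
    ∃ m : ℕ, wordProd N ξ l = ξ ^ m • mono N ξ (sWord N l) := by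
  obtain ⟨m, hm⟩ := word_mul_mono N ξ hN hone hn1 l 0
  refine ⟨m, ?_⟩
  rw [mono_zero, mul_one, add_zero] at hm
  exact hm

lemma mono_mul_mono (hN : 2 < N) (hone : ξ ^ n = 1) (hn1 : n ≠ 0) (a b : MM N) :
    ∃ m : ℕ, mono N ξ a * mono N ξ b = ξ ^ m • mono N ξ (a + b) := by
  obtain ⟨m, hm⟩ := word_mul_mono N ξ hN hone hn1 (listRep N a) b
  rw [sWord_listRep N hN] at hm
  exact ⟨m, hm⟩

lemma gens_adjoin_top : Algebra.adjoin ℂ (Set.range (volterraGen N ξ)) = ⊤ := by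
  have h1 : Set.range (volterraGen N ξ)
      = (RingQuot.mkAlgHom ℂ (VolterraRel N ξ)) '' (Set.range (FreeAlgebra.ι ℂ)) := by
    rw [← Set.range_comp]; rfl
  rw [h1, ← AlgHom.map_adjoin, FreeAlgebra.adjoin_range_ι, Algebra.map_top]
  exact (AlgHom.range_eq_top _).mpr (RingQuot.mkAlgHom_surjective ℂ _)

lemma span_mono_mul (hN : 2 < N) (hone : ξ ^ n = 1) (hn1 : n ≠ 0) {x y : VolterraAlgebra N ξ}
    (hx : x ∈ Submodule.span ℂ (Set.range (mono N ξ)))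
    (hy : y ∈ Submodule.span ℂ (Set.range (mono N ξ))) :
    x * y ∈ Submodule.span ℂ (Set.range (mono N ξ)) := by
  induction hx, hy using Submodule.span_induction₂ with
  | mem_mem x y hx hy =>
    obtain ⟨a, rfl⟩ := hx
    obtain ⟨b, rfl⟩ := hy
    obtain ⟨m, hm⟩ := mono_mul_mono N ξ hN hone hn1 a b
    rw [hm]
    exact Submodule.smul_mem _ _ (Submodule.subset_span ⟨a + b, rfl⟩)
  | zero_left y hy => simp
  | zero_right x hx => simp
  | add_left x y z hx hy hz h1 h2 => rw [add_mul]; exact add_mem h1 h2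
  | add_right x y z hx hy hz h1 h2 => rw [mul_add]; exact add_mem h1 h2
  | smul_left r x y hx hy h => rw [smul_mul_assoc]; exact Submodule.smul_mem _ _ h
  | smul_right r x y hx hy h => rw [mul_smul_comm]; exact Submodule.smul_mem _ _ h

lemma span_mono_top (hN : 2 < N) (hone : ξ ^ n = 1) (hn1 : n ≠ 0) :
    Submodule.span ℂ (Set.range (mono N ξ)) = ⊤ := by
  rw [eq_top_iff]
  intro z _
  have hz : z ∈ Subalgebra.toSubmodule (Algebra.adjoin ℂ (Set.range (volterraGen N ξ))) := by
    rw [gens_adjoin_top]; trivial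
  rw [Algebra.adjoin_eq_span] at hz
  refine Submodule.span_le.mpr ?_ hz
  intro y hy
  induction hy using Submonoid.closure_induction with
  | mem w hw =>
    obtain ⟨i, rfl⟩ := hw
    have hword : volterraGen N ξ i = wordProd N ξ [i] := by
      rw [wordProd_cons, wordProd_nil, mul_one]
    obtain ⟨m, hm⟩ := straighten N ξ hN hone hn1 [i]
    rw [hword, hm]
    exact Submodule.smul_mem _ _ (Submodule.subset_span ⟨_, rfl⟩)
  | one =>
    rw [← mono_zero N ξ]
    exact Submodule.subset_span ⟨0, rfl⟩
  | mul u v hu hv h1 h2 => exact span_mono_mul N ξ hN hone hn1 h1 h2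

def cc (a : MM N) : ℕ := cWord N (listRep N a) 0

lemma phi_mono (hN : 2 < N) (a : MM N) :
    phi N ξ hN (mono N ξ a) (dd N 0) = ξ ^ cc N a • dd N a := by
  rw [mono, phi_word, zero_add, sWord_listRep N hN, cc]

lemma ev_eq_zero (hN : 2 < N) (hone : ξ ^ n = 1) (hn1 : n ≠ 0) (hξ0 : ξ ≠ 0)
    (z : VolterraAlgebra N ξ) (h : phi N ξ hN z (dd N 0) = 0) : z = 0 := by
  have hz : z ∈ Submodule.span ℂ (Set.range (mono N ξ)) := by
    rw [span_mono_top N ξ hN hone hn1]; trivial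
  rw [Finsupp.mem_span_range_iff_exists_finsupp] at hz
  obtain ⟨c, hc⟩ := hz
  have hev : (0 : (MM N) →₀ ℂ) = c.sum fun a r => Finsupp.single a (r * ξ ^ cc N a) := by
    rw [← h, ← hc, map_finsuppSum]
    rw [Finsupp.sum, Finsupp.sum, LinearMap.coe_sum, Finset.sum_apply]
    apply Finset.sum_congr rfl
    intro a _
    rw [map_smul, LinearMap.smul_apply, phi_mono N ξ hN, smul_smul, dd,
      Finsupp.smul_single', mul_one]
  have hcb : ∀ b, c b = 0 := by
    intro b
    have hb := congrArg (fun f => f b) hev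
    rw [Finsupp.sum_apply] at hb
    rw [Finsupp.sum] at hb
    by_cases hmem : b ∈ c.support
    · rw [Finset.sum_eq_single b (fun i _ hne => Finsupp.single_eq_of_ne' hne)
        (fun hb' => absurd hmem hb'), Finsupp.single_eq_same, Finsupp.zero_apply] at hb
      rcases mul_eq_zero.mp hb.symm with h1 | h1
      · exact h1
      · exact absurd h1 (pow_ne_zero _ hξ0)
    · exact Finsupp.notMem_support_iff.mp hmem
  have hc0 : c = 0 := Finsupp.ext hcb
  rw [← hc, hc0, Finsupp.sum_zero_index]

lemma ev_inj (hN : 2 < N) (hone : ξ ^ n = 1) (hn1 : n ≠ 0) (hξ0 : ξ ≠ 0)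
    (z w : VolterraAlgebra N ξ) (h : phi N ξ hN z (dd N 0) = phi N ξ hN w (dd N 0)) :
    z = w := by
  have : z - w = 0 := by
    apply ev_eq_zero N ξ hN hone hn1 hξ0
    rw [map_sub, LinearMap.sub_apply, h, sub_self]
  exact sub_eq_zero.mp this

lemma TT_pow (hN : 2 < N) (i : ZMod N) (k : ℕ) (v : MM N) :
    ((TT N ξ i) ^ k) (dd N v) = ξ ^ (k * v (i - 1)) • dd N (v + Finsupp.single i k) := by
  induction k with
  | zero => simp
  | succ k ih =>
    rw [pow_succ', Module.End.mul_apply, ih, map_smul, TT_dd]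
    have h1 : (v + Finsupp.single i k) (i - 1) = v (i - 1) := by
      rw [Finsupp.add_apply, Finsupp.single_apply, if_neg, add_zero]
      exact fun h => sub_one_ne N hN i h.symm
    rw [h1, smul_smul, ← pow_add]
    congr 1
    · congr 1
      ring
    · rw [add_assoc]
      congr 1
      rw [ee, ← Finsupp.single_add]

lemma comm_with_gens_central (z : VolterraAlgebra N ξ)
    (h : ∀ j, volterraGen N ξ j * z = z * volterraGen N ξ j) :
    z ∈ Subalgebra.center ℂ (VolterraAlgebra N ξ) := by
  rw [Subalgebra.mem_center_iff]
  intro b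
  have hb : b ∈ Algebra.adjoin ℂ (Set.range (volterraGen N ξ)) := by
    rw [gens_adjoin_top]; trivial
  induction hb using Algebra.adjoin_induction with
  | mem x hx => obtain ⟨i, rfl⟩ := hx; exact h i
  | algebraMap r => exact Algebra.commutes r z
  | add x y hx hy h1 h2 => rw [add_mul, mul_add, h1, h2]
  | mul x y hx hy h1 h2 => rw [mul_assoc, h2, ← mul_assoc, h1, mul_assoc]

lemma gen_pow_central (hN : 2 < N) (hone : ξ ^ n = 1) (hn1 : n ≠ 0) (hξ0 : ξ ≠ 0)
    (i : ZMod N) : volterraGen N ξ i ^ n ∈ Subalgebra.center ℂ (VolterraAlgebra N ξ) := by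
  apply comm_with_gens_central
  intro j
  apply ev_inj N ξ hN hone hn1 hξ0
  rw [map_mul, map_mul, map_pow, phi_gen, phi_gen, Module.End.mul_apply, Module.End.mul_apply,
    TT_pow N ξ hN, TT_dd]
  simp only [Finsupp.zero_apply, mul_zero, pow_zero, one_smul, zero_add]
  rw [TT_dd, TT_pow N ξ hN]
  have e1 : ξ ^ ((Finsupp.single i n : MM N) (j - 1)) = 1 := by
    rw [Finsupp.single_apply]
    by_cases h : i = j - 1
    · rw [if_pos h, hone]
    · rw [if_neg h, pow_zero]
  have e2 : ξ ^ (n * (ee N j) (i - 1)) = 1 := by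
    by_cases h : j = i - 1
    · rw [h, ee_apply_self, mul_one, hone]
    · rw [ee_apply_ne N j _ h, mul_zero, pow_zero]
  rw [e1, e2, one_smul, one_smul, add_comm]

def lfull : List (ZMod N) := (List.range N).map fun k => ((k + 1 : ℕ) : ZMod N)

def onea : MM N := sWord N (lfull N)

lemma sWord_apply_count (l : List (ZMod N)) (u : ZMod N) :
    sWord N l u = l.count u := by
  induction l with
  | nil => simp
  | cons x t ih =>
    rw [sWord_cons, Finsupp.add_apply, ih, List.count_cons, ee, Finsupp.single_apply]
    by_cases h : x = u
    · subst h; simp; omega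
    · simp [h, Ne.symm h]

lemma lfull_nodup (hN : 2 < N) : (lfull N).Nodup := by
  apply List.Nodup.map_on
  · intro x hx y hy hxy
    rw [List.mem_range] at hx hy
    exact cast_inj_range N hN hx hy hxy
  · exact List.nodup_range

lemma mem_lfull (hN : 2 < N) (u : ZMod N) : u ∈ lfull N := by
  haveI : NeZero N := ⟨by omega⟩
  rw [lfull, List.mem_map]
  exact ⟨(u - 1).val, List.mem_range.mpr (ZMod.val_lt _), cast_val_succ N hN u⟩

lemma onea_apply (hN : 2 < N) (u : ZMod N) : onea N u = 1 := by
  rw [onea, sWord_apply_count]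
  exact_mod_cast List.count_eq_one_of_mem (lfull_nodup N hN) (mem_lfull N hN u)

lemma cWord_add_apply (l : List (ZMod N)) (v : MM N) :
    cWord N l v = cWord N l 0 + ((l.map fun x => v (x - 1)).sum) := by
  induction l with
  | nil => simp [cWord]
  | cons j t ih =>
    simp only [cWord, ih, List.map_cons, List.sum_cons, Finsupp.add_apply, Finsupp.zero_apply]
    omega

lemma dsum_single (l : List (ZMod N)) (w : ZMod N) :
    ((l.map fun x => (ee N w) (x - 1)).sum) = sWord N l (w + 1) := by
  induction l with
  | nil => simp
  | cons x t ih =>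
    rw [List.map_cons, List.sum_cons, ih, sWord_cons, Finsupp.add_apply]
    congr 1
    by_cases h : x = w + 1
    · subst h
      rw [add_sub_cancel_right, ee_apply_self, ee_apply_self]
    · rw [ee_apply_ne N w (x - 1) (fun hc => h (by rw [hc]; ring)), ee_apply_ne N x _ h]

lemma P_central (hN : 2 < N) (hone : ξ ^ n = 1) (hn1 : n ≠ 0) (hξ0 : ξ ≠ 0) :
    wordProd N ξ (lfull N) ∈ Subalgebra.center ℂ (VolterraAlgebra N ξ) := by
  apply comm_with_gens_central
  intro j
  apply ev_inj N ξ hN hone hn1 hξ0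
  rw [map_mul, map_mul, phi_gen, Module.End.mul_apply, Module.End.mul_apply,
    phi_word N ξ hN, zero_add, map_smul, TT_dd, TT_dd]
  simp only [Finsupp.zero_apply, pow_zero, one_smul, zero_add]
  rw [phi_word N ξ hN]
  have h1 : cWord N (lfull N) (ee N j) = cWord N (lfull N) 0 + 1 := by
    rw [cWord_add_apply, dsum_single, ← onea, onea_apply N hN]
  have h2 : (sWord N (lfull N)) (j - 1) = 1 := onea_apply N hN (j - 1)
  rw [h1, h2, smul_smul, ← pow_add, ← onea]
  congr 1
  rw [add_comm (ee N j) (onea N)]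

lemma pow_eq_pow_mod_of_prim {x y : ℕ} (hξ0 : ξ ≠ 0)
    (hdvd : ∀ l : ℕ, ξ ^ l = 1 → n ∣ l) (h : ξ ^ x = ξ ^ y) : x % n = y % n := by
  rcases le_total x y with hle | hle
  · have hxy : x + (y - x) = y := by omega
    have h2 : ξ ^ x * ξ ^ (y - x) = ξ ^ x * 1 := by
      rw [← pow_add, hxy, h, mul_one]
    obtain ⟨k, hk⟩ := hdvd _ (mul_left_cancel₀ (pow_ne_zero x hξ0) h2)
    have hy : y = x + n * k := by omega
    rw [hy, Nat.add_mul_mod_self_left]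
  · have hxy : y + (x - y) = x := by omega
    have h2 : ξ ^ y * ξ ^ (x - y) = ξ ^ y * 1 := by
      rw [← pow_add, hxy, ← h, mul_one]
    obtain ⟨k, hk⟩ := hdvd _ (mul_left_cancel₀ (pow_ne_zero y hξ0) h2)
    have hx : x = y + n * k := by omega
    rw [hx, Nat.add_mul_mod_self_left]

lemma cWord_listRep_ee (hN : 2 < N) (a : MM N) (j : ZMod N) :
    cWord N (listRep N a) (ee N j) = cc N a + a (j + 1) := by
  rw [cWord_add_apply, dsum_single, sWord_listRep N hN, cc]

lemma phi_apply_sum (hN : 2 < N) (c : (MM N) →₀ ℂ) (v : MM N) :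
    phi N ξ hN (c.sum fun a r => r • mono N ξ a) (dd N v)
      = c.sum fun a r => Finsupp.single (v + a) (r * ξ ^ (cWord N (listRep N a) v)) := by
  rw [map_finsuppSum, LinearMap.finsupp_sum_apply]
  apply Finsupp.sum_congr
  intro a _
  rw [map_smul, LinearMap.smul_apply, mono, phi_word N ξ hN, sWord_listRep N hN,
    smul_smul, dd, Finsupp.smul_single', mul_one]

lemma central_coeff (hN : 2 < N) (hone : ξ ^ n = 1) (hn1 : n ≠ 0) (hξ0 : ξ ≠ 0)
    (hdvd : ∀ l : ℕ, ξ ^ l = 1 → n ∣ l)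
    (z : VolterraAlgebra N ξ) (hz : z ∈ Subalgebra.center ℂ (VolterraAlgebra N ξ))
    (c : (MM N) →₀ ℂ) (hc : (c.sum fun a r => r • mono N ξ a) = z)
    (a₀ : MM N) (ha₀ : a₀ ∈ c.support) (j : ZMod N) :
    a₀ (j - 1) % n = a₀ (j + 1) % n := by
  have hzc : volterraGen N ξ j * z = z * volterraGen N ξ j :=
    Subalgebra.mem_center_iff.mp hz (volterraGen N ξ j)
  have hL : phi N ξ hN (volterraGen N ξ j * z) (dd N 0)
      = c.sum fun a r => Finsupp.single (a + ee N j) (r * ξ ^ (cc N a + a (j - 1))) := by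
    rw [map_mul, phi_gen, Module.End.mul_apply, ← hc, phi_apply_sum N ξ hN, map_finsuppSum]
    apply Finsupp.sum_congr
    intro a _
    rw [zero_add, TT_single, Finsupp.smul_single']
    congr 1
    simp only [cc]
    rw [pow_add]
    ring
  have hR : phi N ξ hN (z * volterraGen N ξ j) (dd N 0)
      = c.sum fun a r => Finsupp.single (ee N j + a) (r * ξ ^ (cc N a + a (j + 1))) := by
    rw [map_mul, phi_gen, Module.End.mul_apply, TT_dd, Finsupp.zero_apply, pow_zero,
      one_smul, zero_add, ← hc, phi_apply_sum N ξ hN]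
    apply Finsupp.sum_congr
    intro a _
    rw [cWord_listRep_ee N hN]
  have heq := hL.symm.trans ((congrArg (fun w => phi N ξ hN w (dd N 0)) hzc).trans hR)
  have hpt := congrArg (fun f => f (a₀ + ee N j)) heq
  simp only [Finsupp.sum_apply] at hpt
  rw [Finsupp.sum, Finsupp.sum,
    Finset.sum_eq_single a₀ (fun i _ hne => Finsupp.single_eq_of_ne'
      (fun hc2 => hne (add_right_cancel hc2))) (fun hb' => absurd ha₀ hb'),
    Finset.sum_eq_single a₀ (fun i _ hne => Finsupp.single_eq_of_ne'
      (fun hc2 => hne (by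
        rw [add_comm (ee N j) i] at hc2
        exact add_right_cancel hc2))) (fun hb' => absurd ha₀ hb'),
    Finsupp.single_eq_same, add_comm (ee N j) a₀, Finsupp.single_eq_same] at hpt
  have hr0 : c a₀ ≠ 0 := Finsupp.mem_support_iff.mp ha₀
  have h2 := mul_left_cancel₀ hr0 hpt
  rw [pow_add, pow_add] at h2
  have h3 := mul_left_cancel₀ (pow_ne_zero (cc N a₀) hξ0) h2
  exact pow_eq_pow_mod_of_prim ξ hξ0 hdvd h3

lemma all_congruent (hN : 2 < N) (hNodd : Odd N) (a : MM N)
    (h : ∀ u : ZMod N, a u % n = a (u + 2) % n) (u v : ZMod N) :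
    a u % n = a v % n := by
  haveI : NeZero N := ⟨by omega⟩
  have hstep : ∀ (k : ℕ) (w : ZMod N), a w % n = a (w + 2 * (k : ℕ)) % n := by
    intro k
    induction k with
    | zero => intro w; simp
    | succ k ih =>
      intro w
      have h1 := ih w
      have h2 := h (w + 2 * (k : ℕ))
      have h3 : w + 2 * ((k : ℕ) : ZMod N) + 2 = w + 2 * (((k + 1 : ℕ) : ℕ) : ZMod N) := by
        push_cast
        ring
      rw [h1, h2, h3]
  have hco : Nat.Coprime 2 N := hNodd.coprime_two_left
  have hinv : ((2 : ℕ) : ZMod N) * ((2 : ℕ) : ZMod N)⁻¹ = 1 := ZMod.coe_mul_inv_eq_one 2 hco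
  set k := (((v - u) * ((2 : ℕ) : ZMod N)⁻¹)).val with hk
  have hcast : ((k : ℕ) : ZMod N) = (v - u) * ((2 : ℕ) : ZMod N)⁻¹ :=
    ZMod.natCast_rightInverse _
  have hidx : u + 2 * ((k : ℕ) : ZMod N) = v := by
    rw [hcast]
    have h2' : ((2 : ℕ) : ZMod N) = (2 : ZMod N) := by push_cast; ring
    rw [← h2']
    calc u + ((2:ℕ) : ZMod N) * ((v - u) * ((2 : ℕ) : ZMod N)⁻¹)
        = u + (((2:ℕ) : ZMod N) * ((2 : ℕ) : ZMod N)⁻¹) * (v - u) := by ring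
      _ = v := by rw [hinv]; ring
  rw [hstep k u, hidx]

def genSet (nn : ℕ) : Set (VolterraAlgebra N ξ) :=
  (Set.range fun i : ZMod N => volterraGen N ξ i ^ nn) ∪
    {((List.range N).map fun i : ℕ =>
        volterraGen N ξ (((i + 1 : ℕ) : ZMod N))).prod}

lemma P_eq : wordProd N ξ (lfull N)
    = ((List.range N).map fun i : ℕ => volterraGen N ξ (((i + 1 : ℕ) : ZMod N))).prod := by
  rw [wordProd, lfull, List.map_map]
  rfl

lemma P_mem : wordProd N ξ (lfull N) ∈ Algebra.adjoin ℂ (genSet N ξ n) := by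
  rw [P_eq]
  exact Algebra.subset_adjoin (Or.inr rfl)

lemma mono_single_mem (hN : 2 < N) (hone : ξ ^ n = 1) (hn1 : n ≠ 0) (hξ0 : ξ ≠ 0)
    (i : ZMod N) (k : ℕ) :
    mono N ξ (Finsupp.single i (n * k)) ∈ Algebra.adjoin ℂ (genSet N ξ n) := by
  obtain ⟨m, hm⟩ := straighten N ξ hN hone hn1 (List.replicate (n * k) i)
  rw [wordProd_replicate, sWord_replicate] at hm
  have h2 : mono N ξ (Finsupp.single i (n * k)) = (ξ ^ m)⁻¹ • (volterraGen N ξ i ^ (n * k)) := by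
    rw [hm, smul_smul, inv_mul_cancel₀ (pow_ne_zero m hξ0), one_smul]
  rw [h2, pow_mul]
  have hgen : volterraGen N ξ i ^ n ∈ Algebra.adjoin ℂ (genSet N ξ n) :=
    Algebra.subset_adjoin (Or.inl ⟨i, rfl⟩)
  exact Subalgebra.smul_mem _ (pow_mem hgen k) _

lemma mono_nsmul_mem (hN : 2 < N) (hone : ξ ^ n = 1) (hn1 : n ≠ 0) (hξ0 : ξ ≠ 0)
    (b : MM N) : mono N ξ (n • b) ∈ Algebra.adjoin ℂ (genSet N ξ n) := by
  induction b using Finsupp.induction with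
  | zero => rw [smul_zero, mono_zero]; exact one_mem _
  | single_add a k f ha hk ih =>
    have hsm : n • (Finsupp.single a k + f) = Finsupp.single a (n * k) + n • f := by
      rw [smul_add, Finsupp.smul_single, smul_eq_mul]
    obtain ⟨m, hm⟩ := mono_mul_mono N ξ hN hone hn1 (Finsupp.single a (n * k)) (n • f)
    have h2 : mono N ξ (Finsupp.single a (n * k) + n • f)
        = (ξ ^ m)⁻¹ • (mono N ξ (Finsupp.single a (n * k)) * mono N ξ (n • f)) := by
      rw [hm, smul_smul, inv_mul_cancel₀ (pow_ne_zero m hξ0), one_smul]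
    rw [hsm, h2]
    exact Subalgebra.smul_mem _
      (mul_mem (mono_single_mem N ξ hN hone hn1 hξ0 a k) ih) _

lemma P_pow (hN : 2 < N) (hone : ξ ^ n = 1) (hn1 : n ≠ 0) (r : ℕ) :
    ∃ m : ℕ, wordProd N ξ (lfull N) ^ r = ξ ^ m • mono N ξ (r • onea N) := by
  induction r with
  | zero => exact ⟨0, by simp⟩
  | succ r ih =>
    obtain ⟨m, hm⟩ := ih
    obtain ⟨m2, hm2⟩ := word_mul_mono N ξ hN hone hn1 (lfull N) (r • onea N)
    refine ⟨m + m2, ?_⟩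
    have hidx : sWord N (lfull N) + r • onea N = (r + 1) • onea N := by
      rw [succ_nsmul, ← onea, add_comm]
    rw [pow_succ', hm, mul_smul_comm, hm2, smul_smul, ← pow_add, hidx]

lemma mono_mem_of_congruent (hN : 2 < N) (hone : ξ ^ n = 1) (hn1 : n ≠ 0) (hξ0 : ξ ≠ 0)
    (a : MM N) (hcong : ∀ u v : ZMod N, a u % n = a v % n) :
    mono N ξ a ∈ Algebra.adjoin ℂ (genSet N ξ n) := by
  set r := a 0 % n with hr
  set b := Finsupp.mapRange (fun m => m / n) (Nat.zero_div n) a with hb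
  have hsplit : a = r • onea N + n • b := by
    ext u
    rw [Finsupp.add_apply, Finsupp.smul_apply, Finsupp.smul_apply, smul_eq_mul,
      smul_eq_mul, Finsupp.mapRange_apply, onea_apply N hN, mul_one]
    calc a u = a u % n + n * (a u / n) := (Nat.mod_add_div _ _).symm
      _ = r + n * (a u / n) := by rw [hcong u 0]
  obtain ⟨m1, hP⟩ := P_pow N ξ hN hone hn1 r
  obtain ⟨m2, hm2⟩ := mono_mul_mono N ξ hN hone hn1 (r • onea N) (n • b)
  have hm1 : mono N ξ (r • onea N) ∈ Algebra.adjoin ℂ (genSet N ξ n) := by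
    have h3 : mono N ξ (r • onea N) = (ξ ^ m1)⁻¹ • (wordProd N ξ (lfull N)) ^ r := by
      rw [hP, smul_smul, inv_mul_cancel₀ (pow_ne_zero m1 hξ0), one_smul]
    rw [h3]
    exact Subalgebra.smul_mem _ (pow_mem (P_mem N ξ) r) _
  have hbmem := mono_nsmul_mem N ξ hN hone hn1 hξ0 b
  have h4 : mono N ξ a
      = (ξ ^ m2)⁻¹ • (mono N ξ (r • onea N) * mono N ξ (n • b)) := by
    rw [hm2, smul_smul, inv_mul_cancel₀ (pow_ne_zero m2 hξ0), one_smul, ← hsplit]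
  rw [h4]
  exact Subalgebra.smul_mem _ (mul_mem hm1 hbmem) _

end VoltAux

/-- for odd `N > 2` and `ξ` a primitive `n`-th root of unity (`n ≥ 2`),
the center of the quantum Volterra algebra equals the unital `ℂ`-subalgebra generated
by `x_1ⁿ, …, x_Nⁿ` together with the (ordered) product `x_1 x_2 ⋯ x_N`. -/
theorem volterra_center (N : ℕ) (hN : 2 < N) (hNodd : Odd N)
    (n : ℕ) (hn : 2 ≤ n) (ξ : ℂ) (hξ : IsPrimitiveRoot ξ n) :
    Subalgebra.center ℂ (VolterraAlgebra N ξ) =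
      Algebra.adjoin ℂ
        ((Set.range fun i : ZMod N => volterraGen N ξ i ^ n) ∪
          {((List.range N).map fun i : ℕ =>
              volterraGen N ξ (((i + 1 : ℕ) : ZMod N))).prod}) := by
  have hone : ξ ^ n = 1 := hξ.pow_eq_one
  have hn1 : n ≠ 0 := by omega
  have hξ0 : ξ ≠ 0 := by
    intro h
    rw [h, zero_pow hn1] at hone
    exact zero_ne_one hone
  have hdvd : ∀ l : ℕ, ξ ^ l = 1 → n ∣ l := fun l hl => (hξ.pow_eq_one_iff_dvd l).mp hl
  apply le_antisymm
  · intro z hz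
    have hzs : z ∈ Submodule.span ℂ (Set.range (VoltAux.mono N ξ)) := by
      rw [VoltAux.span_mono_top N ξ hN hone hn1]; trivial
    rw [Finsupp.mem_span_range_iff_exists_finsupp] at hzs
    obtain ⟨c, hc⟩ := hzs
    rw [← hc]
    show (c.sum fun a r => r • VoltAux.mono N ξ a) ∈ Algebra.adjoin ℂ (VoltAux.genSet N ξ n)
    rw [Finsupp.sum]
    apply sum_mem
    intro a ha
    apply Subalgebra.smul_mem
    apply VoltAux.mono_mem_of_congruent N ξ hN hone hn1 hξ0
    apply VoltAux.all_congruent N hN hNodd a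
    intro u
    have hcc := VoltAux.central_coeff N ξ hN hone hn1 hξ0 hdvd z hz c hc a ha (u + 1)
    have h1 : u + 1 - 1 = u := by ring
    have h2 : u + 1 + 1 = u + 2 := by ring
    rw [h1, h2] at hcc
    exact hcc
  · have hle : Algebra.adjoin ℂ (VoltAux.genSet N ξ n)
        ≤ Subalgebra.center ℂ (VolterraAlgebra N ξ) := by
      apply Algebra.adjoin_le
      rintro x (⟨i, rfl⟩ | hx)
      · exact VoltAux.gen_pow_central N ξ hN hone hn1 hξ0 i
      · rw [Set.mem_singleton_iff] at hx
        rw [hx, ← VoltAux.P_eq N ξ]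
        exact VoltAux.P_central N ξ hN hone hn1 hξ0
    exact hle
end
end
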